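/- Let Σ be a connected bidirected graph on {1,…,d} with edge set E and incidence matrix A. Choose F ⊆ E as follows, setting t := #E − #F: either (Case 1) Σ has no halfedges and every circle is positive, and F consists of d−1 ordinary edges whose columns are linearly independent (a spanning signed tree); or (Case 2) Σ has a halfedge, #F = d, exactly one element of F is a halfedge, and the ordinary edges of F form a spanning tree of {1,…,d}; or (Case 3) Σ has no halfedges but has a negative circle, #F = d, F contains no halfedges, the underlying graph of F is connected and spanning, and the unique circle contained in F is negative, with edge set N ⊆ F. Let ε_1, …, ε_t be the edges of E ∖ F; for each i let C_i ⊆ F ∪ {ε_i} be the unique minimal subset whose columns are ℝ-linearly dependent (it contains ε_i), and let a_i ∈ ℤ^E be the primitive vector with A·a_i = 0, support exactly C_i, and a_i(ε_i) > 0. Define φ : ℤ^E → ℤ^t (in Cases 1 and 2) or φ : ℤ^E → ℤ^t ⊕ ℤ/2ℤ (in Case 3) by φ(x) = (⟨a_1, x⟩, …, ⟨a_t, x⟩), with the additional component Σ_{e∈N} x(e) mod 2 in Case 3. Then φ is surjective and its kernel is exactly A^T ℤ^d; that is, 0 → A^T ℤ^d → ℤ^E → (codomain) → 0 is exact. (This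 realizes the weights of the toric ring R_P of the signed poset with Hasse diagram Σ.) -/

import Mathlib

open Matrix

/-- A column of an incidence matrix corresponding to a halfedge at some vertex. -/
def IsHalfedgeCol {d : ℕ} (c : Fin d → ℤ) : Prop :=
  ∃ (i : Fin d) (s : ℤ), (s = 1 ∨ s = -1) ∧ c = s • Pi.single i (1 : ℤ)

/-- A column of an incidence matrix corresponding to an ordinary edge joining two
distinct vertices. -/
def IsEdgeCol {d : ℕ} (c : Fin d → ℤ) : Prop :=
  ∃ (i j : Fin d) (s s' : ℤ), i ≠ j ∧ (s = 1 ∨ s = -1) ∧ (s' = 1 ∨ s' = -1) ∧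
    c = s • Pi.single i (1 : ℤ) + s' • Pi.single j (1 : ℤ)

/-- `A` is the incidence matrix of a bidirected graph: every column is a halfedge
column or an ordinary edge column. -/
def IsBidirected {d : ℕ} {E : Type*} (A : Matrix (Fin d) E ℤ) : Prop :=
  ∀ e, IsHalfedgeCol (fun v => A v e) ∨ IsEdgeCol (fun v => A v e)

/-- The bidirected graph has a halfedge. -/
def HasHalfedge {d : ℕ} {E : Type*} (A : Matrix (Fin d) E ℤ) : Prop :=
  ∃ e, IsHalfedgeCol (fun v => A v e)

/-- Connectivity of the underlying multigraph of ordinary edges. -/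
def ConnectedInc {d : ℕ} {E : Type*} (A : Matrix (Fin d) E ℤ) : Prop :=
  ∀ i j : Fin d,
    Relation.ReflTransGen (fun u v => u ≠ v ∧ ∃ e, A u e ≠ 0 ∧ A v e ≠ 0) i j

/-- `(u 0, …, u (k-1) ; f 0, …, f (k-1))` is a circle of the bidirected graph with
incidence matrix `A`: distinct vertices, distinct ordinary edges, with `f t` joining
`u t` and `u ((t+1) % k)`. -/
def IsCircle {d : ℕ} {E : Type*} (A : Matrix (Fin d) E ℤ)
    (k : ℕ) (u : ℕ → Fin d) (f : ℕ → E) : Prop :=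
  2 ≤ k ∧
  (∀ t t', t < k → t' < k → u t = u t' → t = t') ∧
  (∀ t t', t < k → t' < k → f t = f t' → t = t') ∧
  (∀ t < k, A (u t) (f t) ≠ 0 ∧ A (u ((t + 1) % k)) (f t) ≠ 0 ∧
    ∀ v, A v (f t) ≠ 0 → v = u t ∨ v = u ((t + 1) % k))

/-- The product of the signs `σ(f_t) = −A(u_t, f_t)·A(u_{t+1}, f_t)` of the edges of a
circle; the circle is positive if this is `1` and negative if it is `-1`. -/
def circleSign {d : ℕ} {E : Type*} (A : Matrix (Fin d) E ℤ)
    (k : ℕ) (u : ℕ → Fin d) (f : ℕ → E) : ℤ :=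
  ∏ t ∈ Finset.range k, (-(A (u t) (f t) * A (u ((t + 1) % k)) (f t)))

namespace WeightsAux

attribute [local instance] Classical.propDecidable
set_option linter.unusedSectionVars false

lemma sq_one {a : ℤ} (h : a = 1 ∨ a = -1) : a * a = 1 := by rcases h with h | h <;> simp [h]

lemma pm_of_ne {a : ℤ} (h : a = 0 ∨ a = 1 ∨ a = -1) (h0 : a ≠ 0) : a = 1 ∨ a = -1 := by
  rcases h with h | h <;> tauto

/-- spec for an ordinary edge column -/
lemma edge_spec {d : ℕ} {c : Fin d → ℤ} (h : IsEdgeCol c) :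
    ∃ i j : Fin d, i ≠ j ∧ (c i = 1 ∨ c i = -1) ∧ (c j = 1 ∨ c j = -1) ∧
      ∀ v, v ≠ i → v ≠ j → c v = 0 := by
  obtain ⟨i, j, s, s', hij, hs, hs', rfl⟩ := h
  refine ⟨i, j, hij, ?_, ?_, ?_⟩
  · simp [Pi.single_apply, hij, hs]
  · simp [Pi.single_apply, hij.symm, hs']
  · intro v hvi hvj; simp [Pi.single_apply, hvi, hvj]

lemma half_spec {d : ℕ} {c : Fin d → ℤ} (h : IsHalfedgeCol c) :
    ∃ i : Fin d, (c i = 1 ∨ c i = -1) ∧ ∀ v, v ≠ i → c v = 0 := by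
  obtain ⟨i, s, hs, rfl⟩ := h
  exact ⟨i, by simp [Pi.single_apply, hs], fun v hv => by simp [Pi.single_apply, hv]⟩

lemma entry_pm {d : ℕ} {c : Fin d → ℤ} (h : IsHalfedgeCol c ∨ IsEdgeCol c) (v : Fin d) :
    c v = 0 ∨ c v = 1 ∨ c v = -1 := by
  rcases h with h | h
  · obtain ⟨i, hi, h0⟩ := half_spec h
    by_cases hv : v = i
    · subst hv; tauto
    · exact Or.inl (h0 v hv)
  · obtain ⟨i, j, _, hi, hj, h0⟩ := edge_spec h
    by_cases hv : v = i
    · subst hv; tauto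
    by_cases hv' : v = j
    · subst hv'; tauto
    · exact Or.inl (h0 v hv hv')

lemma sum_two {ι M : Type*} [AddCommMonoid M] [DecidableEq ι] {s : Finset ι} {g : ι → M}
    {i j : ι} (hi : i ∈ s) (hj : j ∈ s) (hij : i ≠ j)
    (hz : ∀ a ∈ s, a ≠ i → a ≠ j → g a = 0) : ∑ a ∈ s, g a = g i + g j := by
  rw [← Finset.sum_erase_add _ _ hi, ← Finset.sum_erase_add _ _ (Finset.mem_erase.2 ⟨hij.symm, hj⟩)]
  rw [Finset.sum_eq_zero (fun a ha => by
    simp only [Finset.mem_erase] at ha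
    exact hz a ha.2.2 ha.2.1 ha.1)]
  abel

lemma sum_one {ι M : Type*} [AddCommMonoid M] [DecidableEq ι] {s : Finset ι} {g : ι → M}
    {i : ι} (hi : i ∈ s) (hz : ∀ a ∈ s, a ≠ i → g a = 0) : ∑ a ∈ s, g a = g i := by
  rw [← Finset.sum_erase_add _ _ hi, Finset.sum_eq_zero (fun a ha => by
    simp only [Finset.mem_erase] at ha
    exact hz a ha.2 ha.1)]
  abel

lemma prod_pm {ι : Type*} (s : Finset ι) (g : ι → ℤ) (h : ∀ a ∈ s, g a = 1 ∨ g a = -1) :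
    s.prod g = 1 ∨ s.prod g = -1 := by
  classical
  induction s using Finset.induction with
  | empty => simp
  | @insert a s' hx ih =>
    rw [Finset.prod_insert hx]
    rcases h a (Finset.mem_insert_self a s') with h1 | h1 <;>
      rcases ih (fun b hb => h b (Finset.mem_insert_of_mem hb)) with h2 | h2 <;>
        simp [h1, h2]

section Graph

variable {d : ℕ} {E : Type*} [Fintype E] [DecidableEq E] (A : Matrix (Fin d) E ℤ)

/-- step relation via edges in `G` -/
def st (G : Finset E) (u v : Fin d) : Prop :=
  u ≠ v ∧ ∃ e ∈ G, A u e ≠ 0 ∧ A v e ≠ 0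

/-- `y` solves the equations of the edges in `G` with right-hand side `x` -/
def Sol (G : Finset E) (x : E → ℤ) (y : Fin d → ℤ) : Prop := ∀ e ∈ G, ∑ v, A v e * y v = x e

lemma st_symm (G : Finset E) : Symmetric (st A G) := by
  rintro u v ⟨h1, e, he, h2, h3⟩
  exact ⟨h1.symm, e, he, h3, h2⟩

lemma st_mono {G G' : Finset E} (h : G ⊆ G') {u v : Fin d} (hst : st A G u v) :
    st A G' u v := ⟨hst.1, by obtain ⟨e, he, h2⟩ := hst.2; exact ⟨e, h he, h2⟩⟩

noncomputable def deg (G : Finset E) (v : Fin d) : ℕ := (G.filter (fun e => A v e ≠ 0)).card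

noncomputable def touched (G : Finset E) : Finset (Fin d) :=
  Finset.univ.filter (fun v => ∃ e ∈ G, A v e ≠ 0)

lemma mem_touched {G : Finset E} {v : Fin d} : v ∈ touched A G ↔ ∃ e ∈ G, A v e ≠ 0 := by
  simp [touched]

lemma deg_pos_of_touched {G : Finset E} {v : Fin d} (h : v ∈ touched A G) : 1 ≤ deg A G v := by
  rw [mem_touched] at h
  obtain ⟨e, he, hne⟩ := h
  exact Finset.card_pos.2 ⟨e, Finset.mem_filter.2 ⟨he, hne⟩⟩

end Graph

section TS

variable {d : ℕ} {E : Type*} [Fintype E] [DecidableEq E] (A : Matrix (Fin d) E ℤ)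

lemma deg_sum {G : Finset E} (hord : ∀ e ∈ G, IsEdgeCol (fun v => A v e))
    {S : Finset (Fin d)} (hS : touched A G ⊆ S) :
    ∑ v ∈ S, deg A G v = 2 * G.card := by
  classical
  have : ∀ v ∈ S, deg A G v = ∑ e ∈ G, (if A v e ≠ 0 then 1 else 0) := by
    intro v _
    simp [deg, Finset.card_filter]
  rw [Finset.sum_congr rfl this, Finset.sum_comm]
  rw [Finset.sum_congr rfl (g := fun _ => 2) ?_, Finset.sum_const, smul_eq_mul, mul_comm]
  intro e he
  obtain ⟨i, j, hij, hi, hj, h0⟩ := edge_spec (hord e he)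
  have hiS : i ∈ S := hS (mem_touched A |>.2 ⟨e, he, by rcases hi with h|h <;> simp [h]⟩)
  have hjS : j ∈ S := hS (mem_touched A |>.2 ⟨e, he, by rcases hj with h|h <;> simp [h]⟩)
  rw [← Finset.card_filter]
  have : S.filter (fun v => A v e ≠ 0) = {i, j} := by
    ext v
    simp only [Finset.mem_filter, Finset.mem_insert, Finset.mem_singleton]
    constructor
    · rintro ⟨hvS, hv⟩
      by_contra hc
      push_neg at hc
      exact hv (h0 v hc.1 hc.2)
    · rintro (rfl | rfl)
      · exact ⟨hiS, by rcases hi with h|h <;> simp [h]⟩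
      · exact ⟨hjS, by rcases hj with h|h <;> simp [h]⟩
  rw [this, Finset.card_insert_of_notMem (by simpa using hij), Finset.card_singleton]

/-- Existence of a leaf distinct from the root. -/
lemma exists_leaf {G : Finset E} (hord : ∀ e ∈ G, IsEdgeCol (fun v => A v e))
    (hG : G.Nonempty) (r : Fin d)
    (hconn : ∀ v ∈ touched A G, Relation.ReflTransGen (st A G) r v)
    (hcard : G.card + 1 ≤ (insert r (touched A G)).card) :
    ∃ ℓ, ℓ ∈ touched A G ∧ ℓ ≠ r ∧ deg A G ℓ = 1 := by
  classical
  set S := insert r (touched A G) with hSdef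
  by_contra hno
  push_neg at hno
  -- every touched vertex other than r has degree ≥ 2
  have hdeg2 : ∀ v ∈ S.erase r, 2 ≤ deg A G v := by
    intro v hv
    rw [Finset.mem_erase] at hv
    have hvt : v ∈ touched A G := by
      rcases Finset.mem_insert.1 hv.2 with h | h
      · exact absurd h hv.1
      · exact h
    have h1 := deg_pos_of_touched A hvt
    have := hno v hvt hv.1
    omega
  -- r has degree ≥ 1
  have hr1 : 1 ≤ deg A G r := by
    obtain ⟨e0, he0⟩ := hG
    obtain ⟨i, j, hij, hi, hj, h0⟩ := edge_spec (hord e0 he0)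
    have hit : i ∈ touched A G :=
      (mem_touched A).2 ⟨e0, he0, by rcases hi with h|h <;> simp [h]⟩
    rcases Relation.ReflTransGen.cases_head (hconn i hit) with h | ⟨m, hstep, _⟩
    · subst h; exact deg_pos_of_touched A hit
    · obtain ⟨_, e, he, hr, _⟩ := hstep
      exact deg_pos_of_touched A ((mem_touched A).2 ⟨e, he, hr⟩)
  have hsum := deg_sum A hord (S := S) (Finset.subset_insert _ _)
  have hrS : r ∈ S := Finset.mem_insert_self _ _
  rw [← Finset.sum_erase_add _ _ hrS] at hsum
  have hlb : (S.erase r).card • 2 ≤ ∑ v ∈ S.erase r, deg A G v :=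
    Finset.card_nsmul_le_sum _ _ _ hdeg2
  have hce : (S.erase r).card = S.card - 1 := Finset.card_erase_of_mem hrS
  have hSc : G.card + 1 ≤ S.card := hcard
  have h1S : 1 ≤ S.card := Finset.card_pos.2 ⟨r, hrS⟩
  simp only [smul_eq_mul] at hlb
  omega

/-- projection of paths after removing a leaf edge -/
lemma proj_path {G : Finset E} {ℓ w : Fin d} {e₀ : E} (hwl : w ≠ ℓ)
    (hzero : ∀ e ∈ G.erase e₀, A ℓ e = 0)
    (hrows : ∀ v, v ≠ ℓ → v ≠ w → A v e₀ = 0) :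
    ∀ a b, Relation.ReflTransGen (st A G) a b →
      Relation.ReflTransGen (st A (G.erase e₀))
        (if a = ℓ then w else a) (if b = ℓ then w else b) := by
  intro a b hab
  induction hab with
  | refl => exact Relation.ReflTransGen.refl
  | tail hab hstep ih =>
    rename_i b c
    obtain ⟨hne, e, he, hB, hC⟩ := hstep
    by_cases hee : e = e₀
    · subst hee
      have hb : b = ℓ ∨ b = w := by
        by_contra hcon; push_neg at hcon
        exact hB (hrows b hcon.1 hcon.2)
      have hc : c = ℓ ∨ c = w := by
        by_contra hcon; push_neg at hcon
        exact hC (hrows c hcon.1 hcon.2)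
      have : (if b = ℓ then w else b) = (if c = ℓ then w else c) := by
        rcases hb with rfl | rfl <;> rcases hc with rfl | rfl <;> simp_all
      rw [← this]; exact ih
    · have heG' : e ∈ G.erase e₀ := Finset.mem_erase.2 ⟨hee, he⟩
      have hbl : b ≠ ℓ := fun h => hB (h ▸ hzero e heG')
      have hcl : c ≠ ℓ := fun h => hC (h ▸ hzero e heG')
      rw [if_neg hcl]
      refine ih.tail ?_
      rw [if_neg hbl]
      exact ⟨hne, e, heG', hB, hC⟩

/-- Tree-solving: prescribed root value, all edge equations solvable. -/
lemma tree_solve : ∀ (n : ℕ) (G : Finset E), G.card = n →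
    (∀ e ∈ G, IsEdgeCol (fun v => A v e)) →
    ∀ r : Fin d, (∀ v ∈ touched A G, Relation.ReflTransGen (st A G) r v) →
    G.card + 1 ≤ (insert r (touched A G)).card →
    ∀ (x : E → ℤ) (c : ℤ), ∃ y, y r = c ∧ Sol A G x y := by
  intro n
  induction n using Nat.strong_induction_on with
  | _ n IH =>
    intro G hGn hord r hconn hcard x c
    rcases Finset.eq_empty_or_nonempty G with rfl | hG
    · exact ⟨fun _ => c, rfl, fun e he => absurd he (by simp)⟩
    obtain ⟨ℓ, hlt, hlr, hdeg⟩ := exists_leaf A hord hG r hconn hcard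
    -- the unique edge at ℓ
    obtain ⟨e₀, he₀⟩ := Finset.card_eq_one.1 hdeg
    have he₀G : e₀ ∈ G := by
      have : e₀ ∈ G.filter (fun e => A ℓ e ≠ 0) := he₀ ▸ Finset.mem_singleton_self e₀
      exact (Finset.mem_filter.1 this).1
    have hle₀ : A ℓ e₀ ≠ 0 := by
      have : e₀ ∈ G.filter (fun e => A ℓ e ≠ 0) := he₀ ▸ Finset.mem_singleton_self e₀
      exact (Finset.mem_filter.1 this).2
    have huniq : ∀ e ∈ G, e ≠ e₀ → A ℓ e = 0 := by
      intro e he hne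
      by_contra hc
      have : e ∈ G.filter (fun e => A ℓ e ≠ 0) := Finset.mem_filter.2 ⟨he, hc⟩
      rw [he₀, Finset.mem_singleton] at this
      exact hne this
    obtain ⟨i, j, hij, hi, hj, h0⟩ := edge_spec (hord e₀ he₀G)
    have hlij : ℓ = i ∨ ℓ = j := by
      by_contra hc; push_neg at hc; exact hle₀ (h0 ℓ hc.1 hc.2)
    -- w : the other endpoint
    set w := if ℓ = i then j else i with hwdef
    obtain ⟨hwl, hwpm, hlpm, hrows⟩ :
        w ≠ ℓ ∧ (A w e₀ = 1 ∨ A w e₀ = -1) ∧ (A ℓ e₀ = 1 ∨ A ℓ e₀ = -1) ∧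
          (∀ v, v ≠ ℓ → v ≠ w → A v e₀ = 0) := by
      by_cases hli : ℓ = i
      · refine ⟨?_, ?_, ?_, ?_⟩
        · rw [hwdef, if_pos hli, hli]; exact fun h => hij h.symm
        · rw [hwdef, if_pos hli]; exact hj
        · rw [hli]; exact hi
        · intro v h1 h2
          rw [hwdef, if_pos hli] at h2
          exact h0 v (by rwa [← hli]) h2
      · have hlj : ℓ = j := hlij.resolve_left hli
        refine ⟨?_, ?_, ?_, ?_⟩
        · rw [hwdef, if_neg hli, hlj]; exact fun h => hij h
        · rw [hwdef, if_neg hli]; exact hi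
        · rw [hlj]; exact hj
        · intro v h1 h2
          rw [hwdef, if_neg hli] at h2
          exact h0 v h2 (by rwa [← hlj])
    set G' := G.erase e₀ with hG'def
    have hzero : ∀ e ∈ G', A ℓ e = 0 := fun e he =>
      huniq e (Finset.mem_of_mem_erase he) (Finset.ne_of_mem_erase he)
    have hrl : r ≠ ℓ := hlr.symm
    -- touched G' avoids ℓ
    have htl : ∀ v ∈ touched A G', v ≠ ℓ := by
      intro v hv hveq
      obtain ⟨e, he, hne⟩ := (mem_touched A).1 hv
      rw [hveq] at hne
      exact hne (hzero e he)
    have hconn' : ∀ v ∈ touched A G', Relation.ReflTransGen (st A G') r v := by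
      intro v hv
      have hvG : v ∈ touched A G := by
        obtain ⟨e, he, hne⟩ := (mem_touched A).1 hv
        exact (mem_touched A).2 ⟨e, Finset.mem_of_mem_erase he, hne⟩
      have := proj_path A hwl hzero hrows r v (hconn v hvG)
      rwa [if_neg hrl, if_neg (htl v hv)] at this
    -- the other endpoint stays in the new vertex set
    have hwS' : w ∈ insert r (touched A G') := by
      by_cases hwr : w = r
      · exact hwr ▸ Finset.mem_insert_self _ _
      by_cases hwt : ∃ e ∈ G', A w e ≠ 0
      · exact Finset.mem_insert_of_mem ((mem_touched A).2 hwt)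
      push_neg at hwt
      exfalso
      -- trap argument: no path from r can reach {ℓ, w}
      have trap : ∀ z, Relation.ReflTransGen (st A G) r z → z ≠ ℓ ∧ z ≠ w := by
        intro z hz
        induction hz with
        | refl => exact ⟨hrl, fun h => hwr h.symm⟩
        | tail hab hstep ih =>
          rename_i b c
          obtain ⟨hne, e, he, hB, hC⟩ := hstep
          constructor
          · intro hcl
            rw [hcl] at hC
            have hee : e = e₀ := by
              by_contra hee
              exact hC (huniq e he hee)
            rw [hee] at hB
            by_cases h1 : b = ℓ
            · exact ih.1 h1
            · by_cases h2 : b = w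
              · exact ih.2 h2
              · exact hB (hrows b h1 h2)
          · intro hcw
            rw [hcw] at hC
            by_cases hee : e = e₀
            · rw [hee] at hB
              by_cases h1 : b = ℓ
              · exact ih.1 h1
              · by_cases h2 : b = w
                · exact ih.2 h2
                · exact hB (hrows b h1 h2)
            · exact hC (hwt e (Finset.mem_erase.2 ⟨hee, he⟩))
      exact (trap ℓ (hconn ℓ hlt)).1 rfl
    -- cardinality bound for the recursion
    have hsub : (insert r (touched A G)).erase ℓ ⊆ insert r (touched A G') := by
      intro v hv
      rw [Finset.mem_erase] at hv
      rcases Finset.mem_insert.1 hv.2 with rfl | hvt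
      · exact Finset.mem_insert_self _ _
      obtain ⟨e, he, hne⟩ := (mem_touched A).1 hvt
      by_cases hee : e = e₀
      · subst hee
        have : v = w := by
          by_contra hc
          exact hne (hrows v hv.1 hc)
        exact this ▸ hwS'
      · exact Finset.mem_insert_of_mem ((mem_touched A).2 ⟨e, Finset.mem_erase.2 ⟨hee, he⟩, hne⟩)
    have hlS : ℓ ∈ insert r (touched A G) := Finset.mem_insert_of_mem hlt
    have hcard' : G'.card + 1 ≤ (insert r (touched A G')).card := by
      have h1 : G'.card = G.card - 1 := Finset.card_erase_of_mem he₀G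
      have h2 : ((insert r (touched A G)).erase ℓ).card = (insert r (touched A G)).card - 1 :=
        Finset.card_erase_of_mem hlS
      have h3 := Finset.card_le_card hsub
      have h4 : 1 ≤ G.card := Finset.card_pos.2 hG
      omega
    have hcn : G'.card < n := by
      have : G'.card = G.card - 1 := Finset.card_erase_of_mem he₀G
      have h4 : 1 ≤ G.card := Finset.card_pos.2 hG
      omega
    obtain ⟨y', hy'r, hsol'⟩ := IH G'.card hcn G' rfl
      (fun e he => hord e (Finset.mem_of_mem_erase he)) r hconn' hcard' x c
    refine ⟨Function.update y' ℓ (A ℓ e₀ * (x e₀ - A w e₀ * y' w)), ?_, ?_⟩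
    · rw [Function.update_of_ne hrl]; exact hy'r
    intro e he
    by_cases hee : e = e₀
    · rw [hee]
      have hsum : ∑ v, A v e₀ * Function.update y' ℓ (A ℓ e₀ * (x e₀ - A w e₀ * y' w)) v
          = A ℓ e₀ * Function.update y' ℓ (A ℓ e₀ * (x e₀ - A w e₀ * y' w)) ℓ
            + A w e₀ * Function.update y' ℓ (A ℓ e₀ * (x e₀ - A w e₀ * y' w)) w := by
        refine sum_two (Finset.mem_univ _) (Finset.mem_univ _) hwl.symm ?_
        intro v _ hv1 hv2
        rw [hrows v hv1 hv2, zero_mul]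
      rw [hsum, Function.update_self, Function.update_of_ne hwl, ← mul_assoc,
        sq_one hlpm, one_mul]
      ring
    · have heG' : e ∈ G' := Finset.mem_erase.2 ⟨hee, he⟩
      rw [← hsol' e heG']
      refine Finset.sum_congr rfl ?_
      intro v _
      by_cases hv : v = ℓ
      · subst hv; rw [hzero e heG', zero_mul, zero_mul]
      · rw [Function.update_of_ne hv]

end TS

section Circles

variable {d : ℕ} {E : Type*} [Fintype E] [DecidableEq E] (A : Matrix (Fin d) E ℤ)

lemma pm_mul {a b : ℤ} (ha : a = 1 ∨ a = -1) (hb : b = 1 ∨ b = -1) :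
    a * b = 1 ∨ a * b = -1 := by rcases ha with h|h <;> rcases hb with h'|h' <;> simp [h, h']

/-- the two endpoints of an ordinary edge are the only nonzero rows -/
lemma rows_pair {e : E} (h : IsEdgeCol (fun v => A v e)) {p q : Fin d} (hpq : p ≠ q)
    (hp : A p e ≠ 0) (hq : A q e ≠ 0) : ∀ z, A z e ≠ 0 → z = p ∨ z = q := by
  obtain ⟨i, j, hij, hi, hj, h0⟩ := edge_spec h
  have mem : ∀ v : Fin d, A v e ≠ 0 → v = i ∨ v = j := by
    intro v hv; by_contra hc; push_neg at hc; exact hv (h0 v hc.1 hc.2)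
  intro z hz
  rcases mem p hp with h1 | h1 <;> rcases mem q hq with h2 | h2 <;>
    rcases mem z hz with h3 | h3 <;> first
      | (left; rw [h1, ← h3])
      | (right; rw [h2, ← h3])
      | (exact absurd (h1.trans h2.symm) hpq)

lemma edge_other {e : E} (h : IsEdgeCol (fun v => A v e)) {v : Fin d} (hv : A v e ≠ 0) :
    ∃ w, w ≠ v ∧ (A w e = 1 ∨ A w e = -1) ∧ (A v e = 1 ∨ A v e = -1) ∧
      ∀ z, z ≠ v → z ≠ w → A z e = 0 := by
  obtain ⟨i, j, hij, hi, hj, h0⟩ := edge_spec h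
  have hvij : v = i ∨ v = j := by
    by_contra hc; push_neg at hc; exact hv (h0 v hc.1 hc.2)
  rcases hvij with rfl | rfl
  · exact ⟨j, hij.symm, hj, hi, fun z h1 h2 => h0 z h1 h2⟩
  · exact ⟨i, fun hh => hij hh, hi, hj, fun z h1 h2 => h0 z h2 h1⟩

lemma pred_mod {k m : ℕ} (hk : 2 ≤ k) (hm : m < k) :
    ∃ m', m' < k ∧ (m' + 1) % k = m ∧ m' ≠ m ∧ ∀ t, t < k → (t + 1) % k = m → t = m' := by
  refine ⟨if m = 0 then k - 1 else m - 1, ?_, ?_, ?_, ?_⟩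
  · split <;> omega
  · split
    · rename_i h
      have : k - 1 + 1 = k := by omega
      rw [this, Nat.mod_self, h]
    · rename_i h
      have : m - 1 + 1 = m := by omega
      rw [this, Nat.mod_eq_of_lt hm]
  · split <;> omega
  · intro t ht h
    rcases Nat.lt_or_ge (t + 1) k with hlt | hge
    · rw [Nat.mod_eq_of_lt hlt] at h
      split <;> omega
    · have h1 : t + 1 = k := by omega
      rw [h1, Nat.mod_self] at h
      split <;> omega

/-- a path in `G` : distinct vertices joined by consecutive edges -/
def IsPathOn (G : Finset E) (m : ℕ) (u : ℕ → Fin d) (f : ℕ → E) : Prop :=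
  (∀ s t, s ≤ m → t ≤ m → u s = u t → s = t) ∧
  (∀ t < m, f t ∈ G ∧ A (u t) (f t) ≠ 0 ∧ A (u (t + 1)) (f t) ≠ 0)

lemma path_f_inj {G : Finset E} (hord : ∀ e ∈ G, IsEdgeCol (fun v => A v e))
    {m : ℕ} {u : ℕ → Fin d} {f : ℕ → E} (hp : IsPathOn A G m u f) :
    ∀ a b, a < m → b < m → f a = f b → a = b := by
  intro a b ha hb hf
  obtain ⟨hu, he⟩ := hp
  obtain ⟨hfa, ha1, ha2⟩ := he a ha
  obtain ⟨hfb, hb1, hb2⟩ := he b hb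
  rw [hf] at ha1 ha2
  have hne : u a ≠ u (a + 1) := fun h => by
    have := hu a (a + 1) (by omega) (by omega) h; omega
  have cover := rows_pair A (hord (f b) hfb) hne ha1 ha2
  have c1 := cover _ hb1
  have c2 := cover _ hb2
  have i1 : b = a ∨ b = a + 1 := by
    rcases c1 with h | h
    · exact Or.inl (hu b a (by omega) (by omega) h)
    · exact Or.inr (hu b (a + 1) (by omega) (by omega) h)
  have i2 : b + 1 = a ∨ b + 1 = a + 1 := by
    rcases c2 with h | h
    · exact Or.inl (hu (b + 1) a (by omega) (by omega) h)
    · exact Or.inr (hu (b + 1) (a + 1) (by omega) (by omega) h)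
  omega

/-- In a nonempty ordinary-edge set with no vertex of degree one there is a circle. -/
lemma exists_circle_of_no_leaf {G : Finset E}
    (hord : ∀ e ∈ G, IsEdgeCol (fun v => A v e)) (hG : G.Nonempty)
    (hdeg : ∀ v, deg A G v ≠ 1) :
    ∃ k u f, IsCircle A k u f ∧ ∀ t < k, f t ∈ G := by
  classical
  set P : ℕ → Prop := fun m => ∃ u f, IsPathOn A G m u f with hPdef
  obtain ⟨e0, he0⟩ := hG
  obtain ⟨i, j, hij, hi, hj, h0⟩ := edge_spec (hord e0 he0)
  have hP1 : P 1 := by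
    refine ⟨fun n => if n = 0 then i else j, fun _ => e0, ?_, ?_⟩
    · intro s t hs ht h
      interval_cases s <;> interval_cases t <;> simp_all
    · intro t ht
      interval_cases t
      dsimp only
      rw [if_pos rfl, if_neg (by omega : ¬(0 + 1 : ℕ) = 0)]
      exact ⟨he0, by rcases hi with h|h <;> simp [h], by rcases hj with h|h <;> simp [h]⟩
  have hd : 0 < d := Fin.pos i
  have h1d : 1 ≤ d := hd
  set M := Nat.findGreatest P d with hMdef
  have hPM : P M := Nat.findGreatest_spec h1d hP1
  have hM1 : 1 ≤ M := Nat.le_findGreatest h1d hP1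
  obtain ⟨u, f, hp⟩ := hPM
  have hMd : M + 1 ≤ d := by
    have hinj : Function.Injective (fun t : Fin (M + 1) => u t) := by
      intro s t h
      exact Fin.ext (hp.1 s t (by omega) (by omega) h)
    simpa using Fintype.card_le_of_injective _ hinj
  have hM' : M - 1 + 1 = M := by omega
  obtain ⟨hfM, hM2, hM3⟩ := hp.2 (M - 1) (by omega)
  rw [hM'] at hM3
  have htM : u M ∈ touched A G := (mem_touched A).2 ⟨f (M - 1), hfM, hM3⟩
  have hdM : 2 ≤ deg A G (u M) := by
    have := deg_pos_of_touched A htM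
    have := hdeg (u M)
    omega
  obtain ⟨e1, he1, e2, he2, he12⟩ := Finset.one_lt_card.1 hdM
  rw [Finset.mem_filter] at he1 he2
  obtain ⟨e', he'G, he'M, he'f⟩ : ∃ e', e' ∈ G ∧ A (u M) e' ≠ 0 ∧ e' ≠ f (M - 1) := by
    by_cases h : e1 = f (M - 1)
    · exact ⟨e2, he2.1, he2.2, fun hh => he12 (h ▸ hh ▸ rfl)⟩
    · exact ⟨e1, he1.1, he1.2, h⟩
  obtain ⟨w, hwv, hwpm, hvpm, hrows⟩ := edge_other A (hord e' he'G) he'M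
  have hwne0 : A w e' ≠ 0 := by rcases hwpm with h|h <;> simp [h]
  by_cases hcase : ∀ s ≤ M, u s ≠ w
  · exfalso
    have hPM1 : P (M + 1) := by
      refine ⟨fun n => if n = M + 1 then w else u n, fun n => if n = M then e' else f n, ?_, ?_⟩
      · intro s t hs ht h
        dsimp only at h
        by_cases hs1 : s = M + 1 <;> by_cases ht1 : t = M + 1
        · omega
        · rw [if_pos hs1, if_neg ht1] at h
          exact absurd h.symm (hcase t (by omega))
        · rw [if_neg hs1, if_pos ht1] at h
          exact absurd h (hcase s (by omega))
        · rw [if_neg hs1, if_neg ht1] at h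
          exact hp.1 s t (by omega) (by omega) h
      · intro t ht
        dsimp only
        by_cases htM' : t = M
        · subst htM'
          rw [if_pos rfl, if_neg (by omega : ¬M = M + 1), if_pos rfl]
          exact ⟨he'G, he'M, hwne0⟩
        · rw [if_neg htM', if_neg (by omega : ¬t = M + 1),
            if_neg (by omega : ¬t + 1 = M + 1)]
          exact hp.2 t (by omega)
    exact Nat.findGreatest_is_greatest (by omega) hMd hPM1
  · push_neg at hcase
    obtain ⟨i₀, hi₀M, hi₀⟩ := hcase
    have hi₀M' : i₀ < M := by
      rcases Nat.lt_or_ge i₀ M with h | h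
      · exact h
      · exfalso
        have : i₀ = M := by omega
        rw [this] at hi₀
        exact hwv hi₀.symm
    set k := M - i₀ + 1 with hkdef
    have hk2 : 2 ≤ k := by omega
    have aux : ∀ a, a < M - i₀ → f (i₀ + a) ≠ e' := by
      intro a haM heq
      have h1 : A (u M) (f (i₀ + a)) ≠ 0 := heq ▸ he'M
      obtain ⟨hmem, hb1, hb2⟩ := hp.2 (i₀ + a) (by omega)
      have hne : u (i₀ + a) ≠ u (i₀ + a + 1) := fun hh => by
        have := hp.1 (i₀ + a) (i₀ + a + 1) (by omega) (by omega) hh; omega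
      rcases rows_pair A (hord _ hmem) hne hb1 hb2 _ h1 with hcc | hcc
      · have := hp.1 M (i₀ + a) (by omega) (by omega) hcc; omega
      · have hMa : M = i₀ + a + 1 := hp.1 M (i₀ + a + 1) (by omega) (by omega) hcc
        apply he'f
        rw [← heq]
        congr 1
        omega
    refine ⟨k, fun t => u (i₀ + t), fun t => if t = M - i₀ then e' else f (i₀ + t), ?_, ?_⟩
    · refine ⟨hk2, ?_, ?_, ?_⟩
      · intro s t hs ht h
        dsimp only at h
        have := hp.1 (i₀ + s) (i₀ + t) (by omega) (by omega) h
        omega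
      · intro s t hs ht h
        dsimp only at h
        by_cases hs1 : s = M - i₀ <;> by_cases ht1 : t = M - i₀
        · omega
        · rw [if_pos hs1, if_neg ht1] at h
          exact absurd h.symm (aux t (by omega))
        · rw [if_neg hs1, if_pos ht1] at h
          exact absurd h (aux s (by omega))
        · rw [if_neg hs1, if_neg ht1] at h
          have := path_f_inj A hord hp (i₀ + s) (i₀ + t) (by omega) (by omega) h
          omega
      · intro t ht
        dsimp only
        by_cases ht1 : t = M - i₀
        · subst ht1
          rw [if_pos rfl]
          have hk0 : (M - i₀ + 1) % k = 0 := by rw [hkdef]; exact Nat.mod_self _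
          have huM : i₀ + (M - i₀) = M := by omega
          rw [hk0, huM]
          have hw0 : A (u (i₀ + 0)) e' ≠ 0 := by
            rw [Nat.add_zero, hi₀]; exact hwne0
          have hpq : u M ≠ u (i₀ + 0) := by
            rw [Nat.add_zero, hi₀]; exact fun hh => hwv hh.symm
          exact ⟨he'M, hw0, rows_pair A (hord e' he'G) hpq he'M hw0⟩
        · have htk : t < M - i₀ := by omega
          rw [if_neg ht1]
          have hmod : (t + 1) % k = t + 1 := Nat.mod_eq_of_lt (by omega)
          rw [hmod]
          obtain ⟨hmem, hb1, hb2⟩ := hp.2 (i₀ + t) (by omega)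
          have hadd : i₀ + t + 1 = i₀ + (t + 1) := by omega
          rw [hadd] at hb2
          have hne : u (i₀ + t) ≠ u (i₀ + (t + 1)) := fun hh => by
            have := hp.1 (i₀ + t) (i₀ + (t + 1)) (by omega) (by omega) hh; omega
          exact ⟨hb1, hb2, rows_pair A (hord _ hmem) hne hb1 hb2⟩
    · intro t ht
      dsimp only
      by_cases ht1 : t = M - i₀
      · rw [if_pos ht1]; exact he'G
      · rw [if_neg ht1]; exact (hp.2 (i₀ + t) (by omega)).1

end Circles

section CircleAlg

variable {d : ℕ} {E : Type*} [Fintype E] [DecidableEq E] (A : Matrix (Fin d) E ℤ)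
variable {k : ℕ} {u : ℕ → Fin d} {f : ℕ → E}

lemma circle_pm (hA : IsBidirected A) (hc : IsCircle A k u f) {t : ℕ} (ht : t < k) :
    (A (u t) (f t) = 1 ∨ A (u t) (f t) = -1) ∧
      (A (u ((t + 1) % k)) (f t) = 1 ∨ A (u ((t + 1) % k)) (f t) = -1) := by
  obtain ⟨h1, h2, _⟩ := hc.2.2.2 t ht
  exact ⟨pm_of_ne (entry_pm (hA (f t)) _) h1, pm_of_ne (entry_pm (hA (f t)) _) h2⟩

/-- every ±1-combination around a positive circle gives an integer dependency -/
lemma circle_dep (hA : IsBidirected A) (hc : IsCircle A k u f)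
    (hsign : circleSign A k u f = 1) :
    ∃ lam : ℕ → ℤ, (∀ t < k, lam t = 1 ∨ lam t = -1) ∧
      ∀ v, ∑ t ∈ Finset.range k, lam t * A v (f t) = 0 := by
  classical
  obtain ⟨hk2, huinj, hfinj, hedge⟩ := hc
  have hkpos : 0 < k := by omega
  refine ⟨fun t => (∏ s ∈ Finset.range t, -(A (u s) (f s) * A (u ((s + 1) % k)) (f s))) *
      (A (u 0) (f 0) * A (u t) (f t)), ?_, ?_⟩
  · intro t ht
    refine pm_mul (prod_pm _ _ ?_) (pm_mul ((circle_pm A hA ⟨hk2, huinj, hfinj, hedge⟩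
      (by omega : (0:ℕ) < k)).1) ((circle_pm A hA ⟨hk2, huinj, hfinj, hedge⟩ ht).1))
    intro s hs
    rw [Finset.mem_range] at hs
    have hpm := circle_pm A hA ⟨hk2, huinj, hfinj, hedge⟩ (by omega : s < k)
    rcases hpm.1 with h1|h1 <;> rcases hpm.2 with h2|h2 <;> rw [h1, h2] <;> norm_num
  · intro v
    by_cases hv : ∃ m, m < k ∧ u m = v
    · obtain ⟨m, hm, rfl⟩ := hv
      obtain ⟨m', hm'k, hm'succ, hm'ne, hm'uniq⟩ := pred_mod hk2 hm
      have hzero : ∀ t ∈ Finset.range k, t ≠ m → t ≠ m' →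
          (∏ s ∈ Finset.range t, -(A (u s) (f s) * A (u ((s + 1) % k)) (f s))) *
            (A (u 0) (f 0) * A (u t) (f t)) * A (u m) (f t) = 0 := by
        intro t htr ht1 ht2
        rw [Finset.mem_range] at htr
        have hA0 : A (u m) (f t) = 0 := by
          by_contra hne
          rcases (hedge t htr).2.2 _ hne with h | h
          · exact ht1 ((huinj m t hm htr h).symm)
          · have : m = (t + 1) % k := huinj m ((t + 1) % k) hm (Nat.mod_lt _ hkpos) h
            exact ht2 (hm'uniq t htr this.symm)
        rw [hA0, mul_zero]
      rw [sum_two (Finset.mem_range.2 hm) (Finset.mem_range.2 hm'k) (Ne.symm hm'ne) hzero]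
      have hum : A (u m) (f m') = A (u ((m' + 1) % k)) (f m') := by rw [hm'succ]
      rw [hum]
      have hX := (circle_pm A hA ⟨hk2, huinj, hfinj, hedge⟩ hm).1
      have hXX : A (u m) (f m) * A (u m) (f m) = 1 := sq_one hX
      by_cases hm0 : m = 0
      · -- closing the circle : uses the sign
        subst hm0
        have hm'k1 : m' + 1 = k := by
          rcases Nat.lt_or_ge (m' + 1) k with h | h
          · rw [Nat.mod_eq_of_lt h] at hm'succ; omega
          · omega
        have hs : (∏ s ∈ Finset.range m', -(A (u s) (f s) * A (u ((s + 1) % k)) (f s))) *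
            -(A (u m') (f m') * A (u ((m' + 1) % k)) (f m')) = 1 := by
          rw [← Finset.prod_range_succ, hm'k1]
          exact hsign
        rw [Finset.prod_range_zero]
        linear_combination (A (u 0) (f 0)) * hXX - (A (u 0) (f 0)) * hs
      · -- interior vertex
        have hmeq : m = m' + 1 := by
          rcases Nat.lt_or_ge (m' + 1) k with h | h
          · rw [Nat.mod_eq_of_lt h] at hm'succ; omega
          · have : m' + 1 = k := by omega
            rw [this, Nat.mod_self] at hm'succ; omega
        rw [hmeq, Finset.prod_range_succ]
        rw [hmeq] at hXX
        linear_combination (-((∏ s ∈ Finset.range m',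
            -(A (u s) (f s) * A (u ((s + 1) % k)) (f s))) * A (u 0) (f 0) *
            A (u m') (f m') * A (u ((m' + 1) % k)) (f m'))) * hXX
    · refine Finset.sum_eq_zero ?_
      intro t htr
      rw [Finset.mem_range] at htr
      have hA0 : A v (f t) = 0 := by
        by_contra hne
        rcases (hedge t htr).2.2 _ hne with h | h
        · exact hv ⟨t, htr, h.symm⟩
        · exact hv ⟨(t + 1) % k, Nat.mod_lt _ hkpos, h.symm⟩
      rw [hA0, mul_zero]

/-- going around a circle: a vector satisfying all circle-edge equations is scaled by
the circle sign -/
lemma circle_round (hA : IsBidirected A) (hc : IsCircle A k u f) (η : Fin d → ℤ)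
    (heq : ∀ t < k, A (u t) (f t) * η (u t)
      + A (u ((t + 1) % k)) (f t) * η (u ((t + 1) % k)) = 0) :
    η (u 0) = circleSign A k u f * η (u 0) := by
  have hkpos : 0 < k := by have := hc.1; omega
  have key : ∀ t, t ≤ k → η (u (t % k)) =
      (∏ s ∈ Finset.range t, -(A (u s) (f s) * A (u ((s + 1) % k)) (f s))) * η (u 0) := by
    intro t
    induction t with
    | zero => intro _; simp [Nat.zero_mod]
    | succ t ih =>
      intro ht1
      have htk : t < k := by omega
      have h1 := heq t htk
      have hβ := (circle_pm A hA hc htk).2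
      have hβ2 : A (u ((t + 1) % k)) (f t) * A (u ((t + 1) % k)) (f t) = 1 := sq_one hβ
      have hstep : η (u ((t + 1) % k)) =
          -(A (u t) (f t) * A (u ((t + 1) % k)) (f t)) * η (u t) := by
        linear_combination A (u ((t + 1) % k)) (f t) * h1 - η (u ((t + 1) % k)) * hβ2
      have htmod : t % k = t := Nat.mod_eq_of_lt htk
      rw [hstep, Finset.prod_range_succ]
      rw [htmod] at ih
      rw [ih (by omega)]
      ring
  have := key k le_rfl
  rw [Nat.mod_self] at this
  exact this

/-- column sums over the edges of a circle are even in every row -/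
lemma circle_row_even (hA : IsBidirected A) (hc : IsCircle A k u f) (v : Fin d) :
    2 ∣ ∑ t ∈ Finset.range k, A v (f t) := by
  classical
  obtain ⟨hk2, huinj, hfinj, hedge⟩ := hc
  have hkpos : 0 < k := by omega
  by_cases hv : ∃ m, m < k ∧ u m = v
  · obtain ⟨m, hm, rfl⟩ := hv
    obtain ⟨m', hm'k, hm'succ, hm'ne, hm'uniq⟩ := pred_mod hk2 hm
    have hzero : ∀ t ∈ Finset.range k, t ≠ m → t ≠ m' → A (u m) (f t) = 0 := by
      intro t htr ht1 ht2
      rw [Finset.mem_range] at htr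
      by_contra hne
      rcases (hedge t htr).2.2 _ hne with h | h
      · exact ht1 ((huinj m t hm htr h).symm)
      · have : m = (t + 1) % k := huinj m ((t + 1) % k) hm (Nat.mod_lt _ hkpos) h
        exact ht2 (hm'uniq t htr this.symm)
    rw [sum_two (Finset.mem_range.2 hm) (Finset.mem_range.2 hm'k) (Ne.symm hm'ne) hzero]
    have hum : A (u m) (f m') = A (u ((m' + 1) % k)) (f m') := by rw [hm'succ]
    rw [hum]
    have h1 := (circle_pm A hA ⟨hk2, huinj, hfinj, hedge⟩ hm).1
    have h2 := (circle_pm A hA ⟨hk2, huinj, hfinj, hedge⟩ hm'k).2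
    rcases h1 with h|h <;> rcases h2 with h'|h' <;> rw [h, h'] <;> decide
  · rw [Finset.sum_eq_zero]
    · exact Dvd.intro 0 rfl
    intro t htr
    rw [Finset.mem_range] at htr
    by_contra hne
    rcases (hedge t htr).2.2 _ hne with h | h
    · exact hv ⟨t, htr, h.symm⟩
    · exact hv ⟨(t + 1) % k, Nat.mod_lt _ hkpos, h.symm⟩

lemma prod_neg_sum {s : Finset ℕ} {c : ℕ → ℤ} (h : ∀ t ∈ s, c t = 1 ∨ c t = -1) :
    ∃ j : ℕ, (∏ t ∈ s, -c t) = (-1) ^ j ∧ (∑ t ∈ s, (1 + c t)) = 2 * (j : ℤ) := by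
  classical
  induction s using Finset.induction with
  | empty => exact ⟨0, by simp, by simp⟩
  | @insert a s' ha ih =>
    obtain ⟨j, hj1, hj2⟩ := ih (fun b hb => h b (Finset.mem_insert_of_mem hb))
    rcases h a (Finset.mem_insert_self _ _) with h1 | h1
    · refine ⟨j + 1, ?_, ?_⟩
      · rw [Finset.prod_insert ha, hj1, h1]; ring
      · rw [Finset.sum_insert ha, hj2, h1]; push_cast; ring
    · refine ⟨j, ?_, ?_⟩
      · rw [Finset.prod_insert ha, hj1, h1]; ring
      · rw [Finset.sum_insert ha, hj2, h1]; ring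

/-- over a negative circle, the total column sum is ≡ 2 (mod 4) -/
lemma neg_circle_sum (hA : IsBidirected A) (hc : IsCircle A k u f)
    (hsign : circleSign A k u f = -1) :
    ∃ c : ℤ, (∑ t ∈ Finset.range k, (A (u t) (f t) + A (u ((t + 1) % k)) (f t)))
      = 4 * c + 2 := by
  have hpm : ∀ t ∈ Finset.range k,
      A (u t) (f t) * A (u ((t + 1) % k)) (f t) = 1 ∨
      A (u t) (f t) * A (u ((t + 1) % k)) (f t) = -1 := by
    intro t ht
    rw [Finset.mem_range] at ht
    exact pm_mul (circle_pm A hA hc ht).1 (circle_pm A hA hc ht).2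
  obtain ⟨j, hj1, hj2⟩ := prod_neg_sum hpm
  have hj1' : circleSign A k u f = (-1 : ℤ) ^ j := hj1
  have hodd : Odd j := by
    rw [Nat.odd_iff]
    by_contra hev
    have heven : Even j := Nat.even_iff.2 (by omega)
    rw [hj1', Even.neg_one_pow heven] at hsign
    norm_num at hsign
  obtain ⟨r, hr⟩ := hodd
  have hdvd : (4 : ℤ) ∣ ∑ t ∈ Finset.range k,
      ((A (u t) (f t) + A (u ((t + 1) % k)) (f t))
        - (1 + A (u t) (f t) * A (u ((t + 1) % k)) (f t))) := by
    refine Finset.dvd_sum ?_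
    intro t ht
    rw [Finset.mem_range] at ht
    rcases (circle_pm A hA hc ht).1 with h|h <;> rcases (circle_pm A hA hc ht).2 with h'|h' <;>
      rw [h, h'] <;> decide
  obtain ⟨q, hq⟩ := hdvd
  rw [Finset.sum_sub_distrib, hj2] at hq
  have hjz : (j : ℤ) = 2 * (r : ℤ) + 1 := by exact_mod_cast hr
  exact ⟨q + r, by linarith⟩

end CircleAlg

section FS

variable {d : ℕ} {E : Type*} [Fintype E] [DecidableEq E] (A : Matrix (Fin d) E ℤ)

lemma forest_solve (hA : IsBidirected A)
    (hposc : ∀ k u f, IsCircle A k u f → circleSign A k u f = 1)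
    (F0 : Finset E)
    (hind : ∀ g : E → ℝ, (∀ e, e ∉ F0 → g e = 0) →
      (∀ v, ∑ e, g e * (A v e : ℝ) = 0) → ∀ e, g e = 0) :
    ∀ (n : ℕ) (G : Finset E), G ⊆ F0 → G.card = n →
      (∀ e ∈ G, IsEdgeCol (fun v => A v e)) →
      ∀ x : E → ℤ, ∃ y, Sol A G x y := by
  intro n
  induction n using Nat.strong_induction_on with
  | _ n IH =>
    intro G hGF hGn hord x
    rcases Finset.eq_empty_or_nonempty G with rfl | hG
    · exact ⟨0, fun e he => absurd he (by simp)⟩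
    have hleaf : ∃ ℓ, deg A G ℓ = 1 := by
      by_contra hno
      push_neg at hno
      obtain ⟨k, u, f, hcirc, hfG⟩ := exists_circle_of_no_leaf A hord hG hno
      obtain ⟨lam, hlampm, hlam⟩ := circle_dep A hA hcirc (hposc k u f hcirc)
      set g : E → ℝ := fun e => ∑ t ∈ Finset.range k, (if f t = e then (lam t : ℝ) else 0)
        with hgdef
      have hk2 : 2 ≤ k := hcirc.1
      have hg0 : g (f 0) = 0 := by
        refine hind g ?_ ?_ (f 0)
        · intro e he
          refine Finset.sum_eq_zero fun t ht => ?_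
          rw [Finset.mem_range] at ht
          rw [if_neg]
          intro hfe
          exact he (hGF (hfe ▸ hfG t ht))
        · intro v
          have h1 : ∀ e : E, g e * (A v e : ℝ) =
              ∑ t ∈ Finset.range k, (if f t = e then (lam t : ℝ) * (A v e : ℝ) else 0) := by
            intro e
            rw [hgdef]
            dsimp only
            rw [Finset.sum_mul]
            exact Finset.sum_congr rfl (fun t _ => by rw [ite_mul, zero_mul])
          rw [Finset.sum_congr rfl (fun e _ => h1 e), Finset.sum_comm]
          have h2 : ∀ t ∈ Finset.range k,
              (∑ e, (if f t = e then (lam t : ℝ) * (A v e : ℝ) else 0)) =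
                (lam t : ℝ) * (A v (f t) : ℝ) := by
            intro t _
            rw [Finset.sum_ite_eq, if_pos (Finset.mem_univ _)]
          rw [Finset.sum_congr rfl h2]
          have hcast : ((∑ t ∈ Finset.range k, lam t * A v (f t) : ℤ) : ℝ) = 0 := by
            rw [hlam v]; norm_num
          push_cast at hcast
          exact hcast
      have hgval : g (f 0) = (lam 0 : ℝ) := by
        rw [hgdef]
        dsimp only
        rw [sum_one (Finset.mem_range.2 (by omega : (0:ℕ) < k)) ?_]
        · rw [if_pos rfl]
        · intro t ht hne
          rw [Finset.mem_range] at ht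
          rw [if_neg]
          intro hfe
          exact hne (hcirc.2.2.1 t 0 ht (by omega) hfe)
      rw [hgval] at hg0
      rcases hlampm 0 (by omega) with h | h <;> rw [h] at hg0 <;> norm_num at hg0
    obtain ⟨ℓ, hdeg⟩ := hleaf
    obtain ⟨e₀, he₀⟩ := Finset.card_eq_one.1 hdeg
    have he₀G : e₀ ∈ G := by
      have : e₀ ∈ G.filter (fun e => A ℓ e ≠ 0) := he₀ ▸ Finset.mem_singleton_self e₀
      exact (Finset.mem_filter.1 this).1
    have hle₀ : A ℓ e₀ ≠ 0 := by
      have : e₀ ∈ G.filter (fun e => A ℓ e ≠ 0) := he₀ ▸ Finset.mem_singleton_self e₀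
      exact (Finset.mem_filter.1 this).2
    have huniq : ∀ e ∈ G, e ≠ e₀ → A ℓ e = 0 := by
      intro e he hne
      by_contra hc
      have : e ∈ G.filter (fun e => A ℓ e ≠ 0) := Finset.mem_filter.2 ⟨he, hc⟩
      rw [he₀, Finset.mem_singleton] at this
      exact hne this
    obtain ⟨w, hwl, hwpm, hlpm, hrows⟩ := edge_other A (hord e₀ he₀G) hle₀
    set G' := G.erase e₀ with hG'def
    have hzero : ∀ e ∈ G', A ℓ e = 0 := fun e he =>
      huniq e (Finset.mem_of_mem_erase he) (Finset.ne_of_mem_erase he)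
    have hcn : G'.card < n := by
      have : G'.card = G.card - 1 := Finset.card_erase_of_mem he₀G
      have h4 : 1 ≤ G.card := Finset.card_pos.2 hG
      omega
    obtain ⟨y', hsol'⟩ := IH G'.card hcn G' ((Finset.erase_subset _ _).trans hGF) rfl
      (fun e he => hord e (Finset.mem_of_mem_erase he)) x
    refine ⟨Function.update y' ℓ (A ℓ e₀ * (x e₀ - A w e₀ * y' w)), ?_⟩
    intro e he
    by_cases hee : e = e₀
    · rw [hee]
      have hsum : ∑ v, A v e₀ * Function.update y' ℓ (A ℓ e₀ * (x e₀ - A w e₀ * y' w)) v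
          = A ℓ e₀ * Function.update y' ℓ (A ℓ e₀ * (x e₀ - A w e₀ * y' w)) ℓ
            + A w e₀ * Function.update y' ℓ (A ℓ e₀ * (x e₀ - A w e₀ * y' w)) w := by
        refine sum_two (Finset.mem_univ _) (Finset.mem_univ _) (Ne.symm hwl) ?_
        intro v _ hv1 hv2
        rw [hrows v hv1 hv2, zero_mul]
      rw [hsum, Function.update_self, Function.update_of_ne hwl, ← mul_assoc,
        sq_one hlpm, one_mul]
      ring
    · have heG' : e ∈ G' := Finset.mem_erase.2 ⟨hee, he⟩
      rw [← hsol' e heG']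
      refine Finset.sum_congr rfl ?_
      intro v _
      by_cases hv : v = ℓ
      · rw [hv, hzero e heG', zero_mul, zero_mul]
      · rw [Function.update_of_ne hv]

end FS

section Glue

variable {d : ℕ} {E : Type*} [Fintype E] [DecidableEq E] (A : Matrix (Fin d) E ℤ)

lemma pair_sum (a0 : E → ℤ) (hk : ∀ v, ∑ e, a0 e * A v e = 0) (y : Fin d → ℤ) :
    ∑ e, a0 e * (∑ v, A v e * y v) = 0 := by
  calc ∑ e, a0 e * (∑ v, A v e * y v)
      = ∑ e, ∑ v, (a0 e * A v e) * y v := by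
        refine Finset.sum_congr rfl fun e _ => ?_
        rw [Finset.mul_sum]
        exact Finset.sum_congr rfl fun v _ => by ring
    _ = ∑ v, ∑ e, (a0 e * A v e) * y v := Finset.sum_comm
    _ = 0 := by
        refine Finset.sum_eq_zero fun v _ => ?_
        rw [← Finset.sum_mul, hk v, zero_mul]

lemma split_supp {E' : Type*} [Fintype E'] [DecidableEq E'] (F : Finset E') {e' : E'}
    (he' : e' ∉ F) (a0 g : E' → ℤ) (hsupp0 : ∀ e, a0 e ≠ 0 → e ∈ F ∨ e = e') :
    (∑ e, a0 e * g e) = a0 e' * g e' + ∑ e ∈ F, a0 e * g e := by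
  rw [← Finset.sum_insert (f := fun e => a0 e * g e) he']
  refine (Finset.sum_subset (Finset.subset_univ _) ?_).symm
  intro x _ hx
  have hz : a0 x = 0 := by
    by_contra h
    rcases hsupp0 x h with h1 | h1
    · exact hx (Finset.mem_insert_of_mem h1)
    · exact hx (h1 ▸ Finset.mem_insert_self _ _)
  rw [hz, zero_mul]

lemma key_id (a0 : E → ℤ) (hk : ∀ v, ∑ e, a0 e * A v e = 0) {F : Finset E} {e' : E}
    (he' : e' ∉ F) (hsupp0 : ∀ e, a0 e ≠ 0 → e ∈ F ∨ e = e') (y : Fin d → ℤ) :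
    a0 e' * (∑ v, A v e' * y v) + ∑ e ∈ F, a0 e * (∑ v, A v e * y v) = 0 := by
  have hs := split_supp F he' a0 (fun e => ∑ v, A v e * y v) hsupp0
  rw [← hs]
  exact pair_sum A a0 hk y

lemma sum_ind {E' : Type*} [DecidableEq E'] (s : Finset E') (e₀ : E') (z : ℤ) :
    (∑ e ∈ s, (if e = e₀ then z else 0)) = if e₀ ∈ s then z else 0 :=
  Finset.sum_ite_eq' s e₀ (fun _ => z)

lemma sum_mul_ind {E' : Type*} [DecidableEq E'] (s : Finset E') (h : E' → ℤ) {e₀ : E'}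
    (he₀ : e₀ ∈ s) (z : ℤ) :
    ∑ e ∈ s, h e * (if e = e₀ then z else 0) = h e₀ * z := by
  rw [Finset.sum_congr rfl (fun e _ => by rw [mul_ite, mul_zero]),
    Finset.sum_ite_eq', if_pos he₀]

lemma no_common_prime {E' : Type*} [Fintype E'] [DecidableEq E'] (a0 : E' → ℤ)
    (hprim0 : Finset.univ.gcd a0 = 1) {p : ℕ} (hp : p.Prime)
    (h : ∀ e, (p : ℤ) ∣ a0 e) : False := by
  have hgcd : (p : ℤ) ∣ Finset.univ.gcd a0 := Finset.dvd_gcd fun e _ => h e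
  rw [hprim0] at hgcd
  have := Int.isUnit_iff.1 (isUnit_of_dvd_one hgcd)
  have hp2 := hp.two_le
  rcases this with h | h <;> omega

lemma prime_transfer {p : ℕ} {z : ℤ} (h : p ∣ z.natAbs) : (p : ℤ) ∣ z :=
  Int.dvd_natAbs.1 (Int.natCast_dvd_natCast.2 h)

lemma one_of_no_prime {z : ℤ} (hzpos : 0 < z)
    (h : ∀ p : ℕ, p.Prime → ¬ p ∣ z.natAbs) : z = 1 := by
  have hnat : z.natAbs = 1 := Nat.eq_one_iff_not_exists_prime_dvd.2 h
  omega


lemma pair_mulVec_aux (a0 : E → ℤ) (hk : ∀ v, ∑ e, a0 e * A v e = 0) (y : Fin d → ℤ) :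
    ∑ e, a0 e * Aᵀ.mulVec y e = 0 := by
  have hmv : ∀ e : E, Aᵀ.mulVec y e = ∑ v, A v e * y v := by
    intro e
    simp [Matrix.mulVec, dotProduct, Matrix.transpose_apply]
  rw [Finset.sum_congr rfl fun e _ => by rw [hmv e]]
  exact pair_sum A a0 hk y

section Master

variable {F : Finset E} {t : ℕ} {ε : Fin t → E} {a : Fin t → E → ℤ}

lemma pair_eps (hεinj : Function.Injective ε)
    (hεF : ∀ i, ε i ∉ F)
    (hsupp : ∀ i e, a i e ≠ 0 → e ∈ F ∨ e = ε i)
    (hunit : ∀ i, a i (ε i) = 1) (i : Fin t) (z : Fin t → ℤ) :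
    ∑ e, a i e * (∑ j, if e = ε j then z j else 0) = z i := by
  have hεother : ∀ j, j ≠ i → a i (ε j) = 0 := by
    intro j hji
    by_contra h
    rcases hsupp i (ε j) h with h1 | h1
    · exact hεF j h1
    · exact hji (hεinj h1)
  have h1 : ∀ e : E, a i e * (∑ j, if e = ε j then z j else 0)
      = ∑ j, (if e = ε j then a i e * z j else 0) := by
    intro e
    rw [Finset.mul_sum]
    exact Finset.sum_congr rfl fun j _ => by rw [mul_ite, mul_zero]
  rw [Finset.sum_congr rfl fun e _ => h1 e, Finset.sum_comm]
  have h2 : ∀ j : Fin t, (∑ e, if e = ε j then a i e * z j else 0) = a i (ε j) * z j := by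
    intro j
    rw [Finset.sum_ite_eq', if_pos (Finset.mem_univ _)]
  rw [Finset.sum_congr rfl fun j _ => h2 j]
  rw [sum_one (Finset.mem_univ i) ?_]
  · rw [hunit i, one_mul]
  · intro j _ hne
    rw [hεother j hne, zero_mul]

lemma kernel_recover
    (hεrange : ∀ e, e ∈ Set.range ε ↔ e ∉ F)
    (hker : ∀ i v, ∑ e, a i e * A v e = 0)
    (hsupp : ∀ i e, a i e ≠ 0 → e ∈ F ∨ e = ε i)
    (hunit : ∀ i, a i (ε i) = 1)
    (x : E → ℤ) (hx : ∀ i, ∑ e, a i e * x e = 0)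
    (y : Fin d → ℤ) (hy : ∀ e ∈ F, (∑ v, A v e * y v) = x e) :
    x = Aᵀ.mulVec y := by
  have hεF : ∀ i, ε i ∉ F := fun i => (hεrange (ε i)).1 ⟨i, rfl⟩
  have hmv : ∀ e : E, Aᵀ.mulVec y e = ∑ v, A v e * y v := by
    intro e
    simp [Matrix.mulVec, dotProduct, Matrix.transpose_apply]
  funext e
  by_cases heF : e ∈ F
  · rw [hmv e]
    exact (hy e heF).symm
  · obtain ⟨i, rfl⟩ := (hεrange e).2 heF
    have h0 := key_id A (a i) (hker i) (hεF i) (hsupp i) y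
    have hx' := hx i
    rw [split_supp F (hεF i) (a i) x (hsupp i)] at hx'
    have hFeq : ∑ e' ∈ F, a i e' * x e' = ∑ e' ∈ F, a i e' * (∑ v, A v e' * y v) :=
      (Finset.sum_congr rfl fun e' he' => by rw [hy e' he']).symm
    rw [hunit i, one_mul] at h0 hx'
    rw [hmv]
    linarith [hFeq, h0, hx']

/-- cases 1 and 2 : from unrestricted solvability on `F` -/
lemma master
    (hεinj : Function.Injective ε)
    (hεrange : ∀ e, e ∈ Set.range ε ↔ e ∉ F)
    (hker : ∀ i v, ∑ e, a i e * A v e = 0)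
    (hprim : ∀ i, Finset.univ.gcd (a i) = 1)
    (hsupp : ∀ i e, a i e ≠ 0 → e ∈ F ∨ e = ε i)
    (hpos : ∀ i, 0 < a i (ε i))
    (SolvF : ∀ x : E → ℤ, ∃ y : Fin d → ℤ, ∀ e ∈ F, (∑ v, A v e * y v) = x e) :
    (Function.Surjective fun (x : E → ℤ) (i : Fin t) => ∑ e, a i e * x e) ∧
      ∀ x : E → ℤ, (∀ i, ∑ e, a i e * x e = 0) ↔ ∃ y : Fin d → ℤ, x = Aᵀ.mulVec y := by
  have hεF : ∀ i, ε i ∉ F := fun i => (hεrange (ε i)).1 ⟨i, rfl⟩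
  -- all the leading coefficients are 1
  have hunit : ∀ i, a i (ε i) = 1 := by
    intro i
    refine one_of_no_prime (hpos i) ?_
    intro p hp hpd
    have hpZ : (p : ℤ) ∣ a i (ε i) := prime_transfer hpd
    refine no_common_prime (a i) (hprim i) hp ?_
    intro e
    by_cases heF : e ∈ F
    · obtain ⟨y, hy⟩ := SolvF (fun e' => if e' = e then 1 else 0)
      have hk2 := key_id A (a i) (hker i) (hεF i) (hsupp i) y
      have hFsum : ∑ e' ∈ F, a i e' * (∑ v, A v e' * y v) = a i e * 1 := by
        rw [Finset.sum_congr rfl fun e' he' => by rw [hy e' he'], sum_mul_ind F (a i) heF 1]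
      rw [hFsum] at hk2
      have heq : a i e = -(a i (ε i) * (∑ v, A v (ε i) * y v)) := by linarith
      rw [heq]
      exact dvd_neg.2 (hpZ.mul_right _)
    · rcases em (e = ε i) with rfl | hne
      · exact hpZ
      · have hz : a i e = 0 := by
          by_contra h
          rcases hsupp i e h with h1 | h1
          · exact heF h1
          · exact hne h1
        rw [hz]
        exact dvd_zero _
  constructor
  · -- surjectivity
    intro z
    refine ⟨fun e => ∑ j, (if e = ε j then z j else 0), ?_⟩
    funext i
    exact pair_eps hεinj hεF hsupp hunit i z
  · intro x
    constructor
    · intro hx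
      obtain ⟨y, hy⟩ := SolvF x
      exact ⟨y, kernel_recover A hεrange hker hsupp hunit x hx y hy⟩
    · rintro ⟨y, rfl⟩ i
      exact pair_mulVec_aux A (a i) (hker i) y

end Master

end Glue

section Master3

variable {d : ℕ} {E : Type*} [Fintype E] [DecidableEq E] (A : Matrix (Fin d) E ℤ)
variable {F : Finset E} {t : ℕ} {ε : Fin t → E} {a : Fin t → E → ℤ}

/-- case 3 : from parity-restricted solvability on `F` -/
lemma master3
    (hεinj : Function.Injective ε)
    (hεrange : ∀ e, e ∈ Set.range ε ↔ e ∉ F)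
    (hker : ∀ i v, ∑ e, a i e * A v e = 0)
    (hprim : ∀ i, Finset.univ.gcd (a i) = 1)
    (hsupp : ∀ i e, a i e ≠ 0 → e ∈ F ∨ e = ε i)
    (hpos : ∀ i, 0 < a i (ε i))
    (N : Finset E) (hNF : N ⊆ F) (hNne : N.Nonempty)
    (hseven : ∀ e : E, 2 ∣ ∑ v, A v e)
    (hrowN : ∀ v, 2 ∣ ∑ e ∈ N, A v e)
    (hN4 : ∃ c : ℤ, ∑ e ∈ N, (∑ v, A v e) = 4 * c + 2)
    (SolvF : ∀ x : E → ℤ, (2 ∣ ∑ e ∈ N, x e) →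
      ∃ y : Fin d → ℤ, ∀ e ∈ F, (∑ v, A v e * y v) = x e) :
    (Function.Surjective (fun (x : E → ℤ) =>
        ((fun i : Fin t => ∑ e, a i e * x e, ((∑ e ∈ N, x e : ℤ) : ZMod 2)) :
          (Fin t → ℤ) × ZMod 2)) ∧
      ∀ x : E → ℤ, ((∀ i, ∑ e, a i e * x e = 0) ∧ ((∑ e ∈ N, x e : ℤ) : ZMod 2) = 0) ↔
        ∃ y : Fin d → ℤ, x = Aᵀ.mulVec y) := by
  have hεF : ∀ i, ε i ∉ F := fun i => (hεrange (ε i)).1 ⟨i, rfl⟩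
  -- solve for single indicators off N and doubled indicators anywhere
  have hunit : ∀ i, a i (ε i) = 1 := by
    intro i
    refine one_of_no_prime (hpos i) ?_
    intro p hp hpd
    have hpZ : (p : ℤ) ∣ a i (ε i) := prime_transfer hpd
    -- generic: solve x on F, conclude consequence for the F-weighted sum
    have hcons : ∀ x : E → ℤ, (2 ∣ ∑ e ∈ N, x e) →
        ∃ C : ℤ, ∑ e ∈ F, a i e * x e = -(a i (ε i) * C) := by
      intro x hx
      obtain ⟨y, hy⟩ := SolvF x hx
      have hk2 := key_id A (a i) (hker i) (hεF i) (hsupp i) y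
      refine ⟨∑ v, A v (ε i) * y v, ?_⟩
      have hFsum : ∑ e' ∈ F, a i e' * (∑ v, A v e' * y v) = ∑ e' ∈ F, a i e' * x e' :=
        Finset.sum_congr rfl fun e' he' => by rw [hy e' he']
      rw [hFsum] at hk2
      linarith
    by_cases hp2 : p = 2
    · -- p = 2 : mod 4 argument with the negative circle
      subst hp2
      have step1 : ∀ e ∈ F, e ∉ N → (2 : ℤ) ∣ a i e := by
        intro e heF heN
        obtain ⟨C, hC⟩ := hcons (fun e' => if e' = e then 1 else 0) (by
          rw [sum_ind N e 1, if_neg heN]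
          exact dvd_zero 2)
        rw [sum_mul_ind F (a i) heF 1, mul_one] at hC
        rw [hC]
        exact dvd_neg.2 (hpZ.mul_right _)
      have pair2 : ∀ e₁ ∈ N, ∀ e₂ ∈ N, e₁ ≠ e₂ → (2 : ℤ) ∣ (a i e₁ + a i e₂) := by
        intro e₁ h1 e₂ h2 hne
        obtain ⟨C, hC⟩ := hcons
          (fun e' => (if e' = e₁ then 1 else 0) + (if e' = e₂ then 1 else 0)) (by
            rw [Finset.sum_add_distrib, sum_ind N e₁ 1, sum_ind N e₂ 1, if_pos h1, if_pos h2]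
            norm_num)
        have hsplit : ∑ e ∈ F, a i e *
            ((if e = e₁ then 1 else 0) + (if e = e₂ then 1 else 0))
            = a i e₁ + a i e₂ := by
          rw [Finset.sum_congr rfl (fun e _ => by ring_nf :
            ∀ e ∈ F, a i e * ((if e = e₁ then (1:ℤ) else 0) + (if e = e₂ then 1 else 0))
              = a i e * (if e = e₁ then (1:ℤ) else 0) + a i e * (if e = e₂ then 1 else 0)),
            Finset.sum_add_distrib, sum_mul_ind F (a i) (hNF h1) 1,
            sum_mul_ind F (a i) (hNF h2) 1]
          ring
        rw [hsplit] at hC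
        rw [hC]
        exact dvd_neg.2 (hpZ.mul_right _)
      refine absurd ?_ (fun (h : False) => h)
      by_cases hall : ∀ e ∈ N, (2 : ℤ) ∣ a i e
      · refine no_common_prime (a i) (hprim i) Nat.prime_two ?_
        intro e
        by_cases heF : e ∈ F
        · by_cases heN : e ∈ N
          · exact_mod_cast hall e heN
          · exact_mod_cast step1 e heF heN
        · rcases em (e = ε i) with rfl | hne
          · exact_mod_cast hpZ
          · have hz : a i e = 0 := by
              by_contra h
              rcases hsupp i e h with h1 | h1
              · exact heF h1
              · exact hne h1
            rw [hz]
            exact dvd_zero _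
      · push_neg at hall
        obtain ⟨e₁, he₁N, he₁odd⟩ := hall
        have hallodd : ∀ e ∈ N, ¬ (2 : ℤ) ∣ a i e := by
          intro e heN h2
          rcases em (e = e₁) with rfl | hne
          · exact he₁odd h2
          · exact he₁odd ((dvd_add_right h2).1 (pair2 e heN e₁ he₁N hne))
        -- the global identity  ∑ₑ aᵢ(e)·(column sum of e) = 0
        have hid : ∑ e, a i e * (∑ v, A v e) = 0 := by
          calc ∑ e, a i e * (∑ v, A v e)
              = ∑ e, ∑ v, (a i e * A v e) := by
                refine Finset.sum_congr rfl fun e _ => ?_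
                rw [Finset.mul_sum]
            _ = ∑ v, ∑ e, (a i e * A v e) := Finset.sum_comm
            _ = 0 := Finset.sum_eq_zero fun v _ => hker i v
        have hsplit : (∑ e, a i e * (∑ v, A v e)) = a i (ε i) * (∑ v, A v (ε i))
            + ∑ e ∈ F, a i e * (∑ v, A v e) :=
          split_supp F (hεF i) (a i) (fun e => ∑ v, A v e) (hsupp i)
        rw [hsplit] at hid
        rw [← Finset.sum_sdiff hNF] at hid
        obtain ⟨c, hc⟩ := hN4
        obtain ⟨q1, hq1⟩ : (4 : ℤ) ∣ a i (ε i) * (∑ v, A v (ε i)) := by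
          have : (4 : ℤ) = 2 * 2 := by norm_num
          rw [this]
          exact mul_dvd_mul hpZ (hseven _)
        obtain ⟨q2, hq2⟩ : (4 : ℤ) ∣ ∑ e ∈ F \ N, a i e * (∑ v, A v e) := by
          refine Finset.dvd_sum ?_
          intro e he
          rw [Finset.mem_sdiff] at he
          have : (4 : ℤ) = 2 * 2 := by norm_num
          rw [this]
          exact mul_dvd_mul (step1 e he.1 he.2) (hseven e)
        obtain ⟨q3, hq3⟩ : (4 : ℤ) ∣ ∑ e ∈ N, (a i e * (∑ v, A v e) - (∑ v, A v e)) := by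
          refine Finset.dvd_sum ?_
          intro e heN
          have hdodd := hallodd e heN
          obtain ⟨m, hm⟩ := hseven e
          have h21 : (2 : ℤ) ∣ (a i e - 1) := by omega
          have hre : a i e * (∑ v, A v e) - (∑ v, A v e) = (a i e - 1) * (∑ v, A v e) := by
            ring
          rw [hre]
          have : (4 : ℤ) = 2 * 2 := by norm_num
          rw [this]
          exact mul_dvd_mul h21 (hseven e)
        rw [Finset.sum_sub_distrib] at hq3
        have hfinal : 4 * q1 + 4 * q2 + 4 * q3 + 4 * c + 2 = 0 := by linarith
        omega
    · -- p odd
      refine no_common_prime (a i) (hprim i) hp ?_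
      intro e
      by_cases heF : e ∈ F
      · obtain ⟨C, hC⟩ := hcons (fun e' => if e' = e then 2 else 0) (by
          rw [sum_ind N e 2]
          split
          · norm_num
          · exact dvd_zero 2)
        rw [sum_mul_ind F (a i) heF 2] at hC
        have hdvd2 : (p : ℤ) ∣ 2 * a i e := by
          have h2 : 2 * a i e = -(a i (ε i) * C) := by linarith
          rw [h2]
          exact dvd_neg.2 (hpZ.mul_right _)
        rcases Int.Prime.dvd_mul hp hdvd2 with h | h
        · exfalso
          have h2 : p ∣ 2 := by simpa using h
          rcases (Nat.Prime.eq_one_or_self_of_dvd Nat.prime_two p h2) with h3 | h3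
          · exact hp.one_lt.ne' h3
          · exact hp2 h3
        · exact prime_transfer h
      · rcases em (e = ε i) with rfl | hne
        · exact hpZ
        · have hz : a i e = 0 := by
            by_contra h
            rcases hsupp i e h with h1 | h1
            · exact heF h1
            · exact hne h1
          rw [hz]
          exact dvd_zero _
  constructor
  · -- surjectivity
    rintro ⟨z, b⟩
    obtain ⟨e₀, he₀N⟩ := hNne
    obtain ⟨nb, hnb⟩ : ∃ n : ℕ, (((n : ℤ) : ZMod 2)) = b := by
      refine ⟨b.val, ?_⟩
      push_cast
      rw [ZMod.natCast_val, ZMod.cast_id]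
    refine ⟨fun e => (∑ j, if e = ε j then z j else 0) +
      (nb : ℤ) * ((if e = e₀ then 1 else 0) - (∑ j, if e = ε j then a j e₀ else 0)), ?_⟩
    have hzer : ∀ e ∈ N, (∑ j, if e = ε j then z j else 0) = 0 := by
      intro e heN
      refine Finset.sum_eq_zero fun j _ => ?_
      rw [if_neg]
      intro h
      exact hεF j (h ▸ hNF heN)
    have hzer2 : ∀ e ∈ N, (∑ j, if e = ε j then a j e₀ else 0) = 0 := by
      intro e heN
      refine Finset.sum_eq_zero fun j _ => ?_
      rw [if_neg]
      intro h
      exact hεF j (h ▸ hNF heN)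
    simp only [Prod.mk.injEq]
    constructor
    · funext i
      have hterm : ∀ e : E, a i e * ((∑ j, if e = ε j then z j else 0) +
          (nb : ℤ) * ((if e = e₀ then 1 else 0) - (∑ j, if e = ε j then a j e₀ else 0)))
          = a i e * (∑ j, if e = ε j then z j else 0)
            + (nb : ℤ) * (a i e * (if e = e₀ then 1 else 0))
            - (nb : ℤ) * (a i e * (∑ j, if e = ε j then a j e₀ else 0)) := by
        intro e
        ring
      rw [Finset.sum_congr rfl fun e _ => hterm e]
      rw [Finset.sum_sub_distrib, Finset.sum_add_distrib, ← Finset.mul_sum, ← Finset.mul_sum]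
      rw [pair_eps hεinj hεF hsupp hunit i z,
        pair_eps hεinj hεF hsupp hunit i (fun j => a j e₀),
        sum_mul_ind Finset.univ (a i) (Finset.mem_univ e₀) 1]
      ring
    · have hNsum : ∑ e ∈ N, ((∑ j, if e = ε j then z j else 0) +
          (nb : ℤ) * ((if e = e₀ then 1 else 0) - (∑ j, if e = ε j then a j e₀ else 0)))
          = (nb : ℤ) := by
        rw [Finset.sum_add_distrib, Finset.sum_eq_zero hzer, zero_add]
        rw [← Finset.mul_sum, Finset.sum_sub_distrib, Finset.sum_eq_zero hzer2,
          sum_ind N e₀ 1, if_pos he₀N]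
        ring
      rw [hNsum, hnb]
  · intro x
    constructor
    · rintro ⟨hx1, hx2⟩
      have hx2' : (2 : ℤ) ∣ ∑ e ∈ N, x e := by
        have := (ZMod.intCast_zmod_eq_zero_iff_dvd (∑ e ∈ N, x e) 2).1 hx2
        exact_mod_cast this
      obtain ⟨y, hy⟩ := SolvF x hx2'
      exact ⟨y, kernel_recover A hεrange hker hsupp hunit x hx1 y hy⟩
    · rintro ⟨y, rfl⟩
      constructor
      · intro i
        exact pair_mulVec_aux A (a i) (hker i) y
      · rw [ZMod.intCast_zmod_eq_zero_iff_dvd]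
        have hmv : ∀ e : E, Aᵀ.mulVec y e = ∑ v, A v e * y v := by
          intro e
          simp [Matrix.mulVec, dotProduct, Matrix.transpose_apply]
        rw [Finset.sum_congr rfl fun e _ => hmv e]
        have hsw : ∑ e ∈ N, (∑ v, A v e * y v) = ∑ v, (∑ e ∈ N, A v e) * y v := by
          rw [Finset.sum_comm]
          exact Finset.sum_congr rfl fun v _ => by rw [Finset.sum_mul]
        rw [hsw]
        have : (((2 : ℕ) : ℤ)) = 2 := by norm_num
        rw [this]
        exact Finset.dvd_sum fun v _ => (hrowN v).mul_right _
  
end Master3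

section Final

variable {d : ℕ} {E : Type*} [Fintype E] [DecidableEq E] (A : Matrix (Fin d) E ℤ)

/-- Case 2 solvability -/
lemma solv_case2 (hd : 1 ≤ d) (hA : IsBidirected A) {F : Finset E}
    (hcard : F.card = d)
    (hhalf : ∃! e, e ∈ F ∧ IsHalfedgeCol fun v => A v e)
    (hconnF : ∀ i j : Fin d, Relation.ReflTransGen
      (fun u v => u ≠ v ∧ ∃ e ∈ F, A u e ≠ 0 ∧ A v e ≠ 0) i j) :
    ∀ x : E → ℤ, ∃ y : Fin d → ℤ, ∀ e ∈ F, (∑ v, A v e * y v) = x e := by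
  classical
  obtain ⟨h, ⟨hhF, hhcol⟩, huniq⟩ := hhalf
  obtain ⟨w, hwpm, hw0⟩ := half_spec hhcol
  set G := F.erase h with hGdef
  have hordG : ∀ e ∈ G, IsEdgeCol (fun v => A v e) := by
    intro e he
    rw [Finset.mem_erase] at he
    rcases hA e with hcol | hcol
    · exact absurd (huniq e ⟨he.2, hcol⟩) he.1
    · exact hcol
  have hstep : ∀ u v : Fin d, (u ≠ v ∧ ∃ e ∈ F, A u e ≠ 0 ∧ A v e ≠ 0) → st A G u v := by
    rintro u v ⟨hne, e, heF, hu, hv⟩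
    refine ⟨hne, e, Finset.mem_erase.2 ⟨?_, heF⟩, hu, hv⟩
    rintro rfl
    have hu' : u = w := by
      by_contra hc
      exact hu (hw0 u hc)
    have hv' : v = w := by
      by_contra hc
      exact hv (hw0 v hc)
    exact hne (hu'.trans hv'.symm)
  have hconnG : ∀ i j, Relation.ReflTransGen (st A G) i j := fun i j =>
    Relation.ReflTransGen.mono (fun u v huv => hstep u v huv) i j (hconnF i j)
  have huniv : insert w (touched A G) = Finset.univ := by
    refine Finset.eq_univ_iff_forall.2 fun v => ?_
    by_cases hvw : v = w
    · exact hvw ▸ Finset.mem_insert_self _ _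
    rcases Relation.ReflTransGen.cases_tail (hconnF w v) with hvv | ⟨c, _, hst⟩
    · exact absurd hvv hvw
    · obtain ⟨hne, e, heF, hcne, hvne⟩ := hst
      refine Finset.mem_insert_of_mem ((mem_touched A).2 ⟨e, ?_, hvne⟩)
      refine Finset.mem_erase.2 ⟨?_, heF⟩
      rintro rfl
      exact hvw (by by_contra hc; exact hvne (hw0 v hc))
  have hcardG : G.card + 1 ≤ (insert w (touched A G)).card := by
    rw [huniv]
    have h1 : G.card = F.card - 1 := Finset.card_erase_of_mem hhF
    simp only [Finset.card_univ, Fintype.card_fin]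
    omega
  intro x
  obtain ⟨y, hyw, hsol⟩ := tree_solve A G.card G rfl hordG w
    (fun v _ => hconnG w v) hcardG x (A w h * x h)
  refine ⟨y, fun e he => ?_⟩
  by_cases heh : e = h
  · subst heh
    rw [sum_one (Finset.mem_univ w) (fun v _ hne => by rw [hw0 v hne, zero_mul])]
    rw [hyw, ← mul_assoc, sq_one hwpm, one_mul]
  · exact hsol e (Finset.mem_erase.2 ⟨heh, he⟩)

/-- Case 3 parity-restricted solvability -/
lemma solv_case3 (hd : 1 ≤ d) (hA : IsBidirected A) (hnh : ¬ HasHalfedge A) {F : Finset E}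
    (hcard : F.card = d)
    (hconnF : ∀ i j : Fin d, Relation.ReflTransGen
      (fun u v => u ≠ v ∧ ∃ e ∈ F, A u e ≠ 0 ∧ A v e ≠ 0) i j)
    {N : Finset E} (hNF : N ⊆ F)
    {k : ℕ} {u : ℕ → Fin d} {f : ℕ → E} (hcirc : IsCircle A k u f)
    (hfF : ∀ s < k, f s ∈ F) (hsign : circleSign A k u f = -1)
    (hNim : (Finset.range k).image f = N) :
    ∀ x : E → ℤ, (2 ∣ ∑ e ∈ N, x e) →
      ∃ y : Fin d → ℤ, ∀ e ∈ F, (∑ v, A v e * y v) = x e := by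
  classical
  have hordE : ∀ e : E, IsEdgeCol (fun v => A v e) := by
    intro e
    rcases hA e with hcol | hcol
    · exact absurd ⟨e, hcol⟩ hnh
    · exact hcol
  obtain ⟨hk2, huinj, hfinj, hedge⟩ := hcirc
  have hkpos : 0 < k := by omega
  have h1k : 1 % k = 1 := Nat.mod_eq_of_lt (by omega)
  have hmodne : ∀ T, T < k → (T + 1) % k ≠ T := by
    intro T hT h
    rcases Nat.lt_or_ge (T + 1) k with hlt | hge
    · rw [Nat.mod_eq_of_lt hlt] at h; omega
    · have : T + 1 = k := by omega
      rw [this, Nat.mod_self] at h; omega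
  set G := F.erase (f 0) with hGdef
  have hf0F : f 0 ∈ F := hfF 0 hkpos
  have hordG : ∀ e ∈ G, IsEdgeCol (fun v => A v e) := fun e _ => hordE e
  -- endpoints of f 0
  have hu01 : u 0 ≠ u ((0 + 1) % k) := by
    intro h
    have := huinj 0 ((0 + 1) % k) hkpos (Nat.mod_lt _ hkpos) h
    rw [h1k] at this
    omega
  have hrows0 : ∀ z, A z (f 0) ≠ 0 → z = u 0 ∨ z = u ((0 + 1) % k) :=
    (hedge 0 hkpos).2.2
  -- the detour around the circle
  have detour : ∀ T, 1 ≤ T → T ≤ k →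
      Relation.ReflTransGen (st A G) (u 1) (u (T % k)) := by
    intro T
    induction T with
    | zero => intro h1 _; omega
    | succ T ih =>
      intro h1 h2
      by_cases hT0 : T = 0
      · subst hT0
        rw [h1k]
      · have hTk : T < k := by omega
        have hTm : T % k = T := Nat.mod_eq_of_lt hTk
        refine Relation.ReflTransGen.tail (ih (by omega) (by omega)) ?_
        rw [hTm]
        refine ⟨?_, f T, ?_, (hedge T hTk).1, (hedge T hTk).2.1⟩
        · intro h
          exact hmodne T hTk ((huinj ((T + 1) % k) T (Nat.mod_lt _ hkpos) hTk h.symm))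
        · refine Finset.mem_erase.2 ⟨?_, hfF T hTk⟩
          intro h
          have := hfinj T 0 hTk hkpos h
          omega
  have hsymmG : Symmetric (Relation.ReflTransGen (st A G)) :=
    by
      intro x y h
      induction h with
      | refl => exact Relation.ReflTransGen.refl
      | tail _ hst ih => exact Relation.ReflTransGen.head (st_symm A G hst) ih
  have hd10 : Relation.ReflTransGen (st A G) (u 1) (u 0) := by
    have := detour k (by omega) le_rfl
    rwa [Nat.mod_self] at this
  have hd01 : Relation.ReflTransGen (st A G) (u 0) (u 1) := hsymmG hd10
  have hconnG : ∀ i j, Relation.ReflTransGen (st A G) i j := by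
    intro i j
    have hpath := hconnF i j
    induction hpath with
    | refl => exact Relation.ReflTransGen.refl
    | tail hab hstep ih =>
      rename_i b c
      obtain ⟨hne, e, heF, hb, hc⟩ := hstep
      by_cases hef : e = f 0
      · subst hef
        rcases hrows0 b hb with hb' | hb' <;> rcases hrows0 c hc with hc' | hc'
        · exact absurd (hb'.trans hc'.symm) hne
        · rw [h1k] at hc'
          exact ih.trans (hb' ▸ hc' ▸ hd01)
        · rw [h1k] at hb'
          exact ih.trans (hb' ▸ hc' ▸ hd10)
        · exact absurd (hb'.trans hc'.symm) hne
      · exact ih.tail ⟨hne, e, Finset.mem_erase.2 ⟨hef, heF⟩, hb, hc⟩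
  have hu1t : u 1 ∈ touched A G := by
    refine (mem_touched A).2 ⟨f 1, ?_, ?_⟩
    · refine Finset.mem_erase.2 ⟨?_, hfF 1 (by omega)⟩
      intro h
      have := hfinj 1 0 (by omega) hkpos h
      omega
    · exact (hedge 1 (by omega)).1
  have huniv : insert (u 0) (touched A G) = Finset.univ := by
    refine Finset.eq_univ_iff_forall.2 fun v => ?_
    by_cases hv0 : v = u 0
    · exact hv0 ▸ Finset.mem_insert_self _ _
    rcases Relation.ReflTransGen.cases_tail (hconnF (u 0) v) with hvv | ⟨c, _, hst⟩
    · exact absurd hvv hv0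
    · obtain ⟨hne, e, heF, hcne, hvne⟩ := hst
      by_cases hef : e = f 0
      · subst hef
        rcases hrows0 v hvne with hv' | hv'
        · exact absurd hv' hv0
        · rw [h1k] at hv'
          exact Finset.mem_insert_of_mem (hv' ▸ hu1t)
      · exact Finset.mem_insert_of_mem
          ((mem_touched A).2 ⟨e, Finset.mem_erase.2 ⟨hef, heF⟩, hvne⟩)
  have hcardG : G.card + 1 ≤ (insert (u 0) (touched A G)).card := by
    rw [huniv]
    have h1 : G.card = F.card - 1 := Finset.card_erase_of_mem hf0F
    simp only [Finset.card_univ, Fintype.card_fin]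
    omega
  -- the switching vector η
  obtain ⟨η, hη0, hηsol⟩ := tree_solve A G.card G rfl hordG (u 0)
    (fun v _ => hconnG (u 0) v) hcardG 0 1
  have hηpm : ∀ v, η v = 1 ∨ η v = -1 := by
    intro v
    have hrt := hconnG (u 0) v
    induction hrt with
    | refl => exact Or.inl hη0
    | tail hab hstep ih =>
      rename_i b c
      obtain ⟨hne, e, heG, hb, hc⟩ := hstep
      obtain ⟨w', hw'b, hw'pm, hbpm, hrows'⟩ := edge_other A (hordG e heG) hb
      have hcw' : c = w' := by
        by_contra hcc
        exact hc (hrows' c hne.symm hcc)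
      rw [hcw']
      have heq : A b e * η b + A w' e * η w' = 0 := by
        have h0 := hηsol e heG
        rw [sum_two (Finset.mem_univ b) (Finset.mem_univ w') (Ne.symm hw'b)
          (fun z _ hz1 hz2 => by rw [hrows' z hz1 hz2, zero_mul])] at h0
        simpa using h0
      have hstep2 : η w' = -(A b e * A w' e) * η b := by
        linear_combination A w' e * heq - η w' * (sq_one hw'pm)
      have hprodpm := pm_mul (pm_mul hbpm hw'pm) ih
      rw [hstep2, show -(A b e * A w' e) * η b = -(A b e * A w' e * η b) by ring]
      rcases hprodpm with h | h <;> rw [h]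
      · exact Or.inr rfl
      · exact Or.inl (by norm_num)
  -- the pairing of the removed edge with η is ±2
  set τ := A (u 0) (f 0) * η (u 0) + A (u ((0 + 1) % k)) (f 0) * η (u ((0 + 1) % k)) with hτ
  have hτeq : ∑ v, A v (f 0) * η v = τ := by
    rw [sum_two (Finset.mem_univ (u 0)) (Finset.mem_univ (u ((0 + 1) % k))) hu01
      (fun z _ hz1 hz2 => by
        rw [show A z (f 0) = 0 from by
          by_contra hcc
          rcases hrows0 z hcc with h | h
          · exact hz1 h
          · exact hz2 h, zero_mul])]
  have hτne : τ ≠ 0 := by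
    intro hτ0
    have heqs : ∀ t < k, A (u t) (f t) * η (u t)
        + A (u ((t + 1) % k)) (f t) * η (u ((t + 1) % k)) = 0 := by
      intro t ht
      by_cases ht0 : t = 0
      · subst ht0
        exact hτ0
      · have hf_tG : f t ∈ G := by
          refine Finset.mem_erase.2 ⟨?_, hfF t ht⟩
          intro h
          have := hfinj t 0 ht hkpos h
          omega
        have h0 := hηsol (f t) hf_tG
        have hune : u t ≠ u ((t + 1) % k) := by
          intro h
          exact hmodne t ht (huinj ((t + 1) % k) t (Nat.mod_lt _ hkpos) ht h.symm)
        rw [sum_two (Finset.mem_univ (u t)) (Finset.mem_univ (u ((t + 1) % k))) hune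
          (fun z _ hz1 hz2 => by
            rw [show A z (f t) = 0 from by
              by_contra hcc
              rcases (hedge t ht).2.2 z hcc with h | h
              · exact hz1 h
              · exact hz2 h, zero_mul])] at h0
        simpa using h0
    have := circle_round A hA ⟨hk2, huinj, hfinj, hedge⟩ η heqs
    rw [hsign] at this
    rw [hη0] at this
    norm_num at this
  have hτpm : τ = 2 ∨ τ = -2 := by
    have h1 := (hedge 0 hkpos).1
    have h2 := (hedge 0 hkpos).2.1
    have hp1 := pm_of_ne (entry_pm (hA (f 0)) _) h1
    have hp2 := pm_of_ne (entry_pm (hA (f 0)) _) h2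
    have hq1 := hηpm (u 0)
    have hq2 := hηpm (u ((0 + 1) % k))
    rw [hτ] at hτne ⊢
    rcases pm_mul hp1 hq1 with h | h <;> rcases pm_mul hp2 hq2 with h' | h' <;>
      rw [h, h'] at hτne ⊢ <;> omega
  -- now solve with the parity correction
  intro x hx
  obtain ⟨y₀, hy₀0, hy₀⟩ := tree_solve A G.card G rfl hordG (u 0)
    (fun v _ => hconnG (u 0) v) hcardG x 0
  have hf0N : f 0 ∈ N := by
    rw [← hNim]
    exact Finset.mem_image.2 ⟨0, Finset.mem_range.2 hkpos, rfl⟩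
  -- parity of the defect
  have hrowN : ∀ v, 2 ∣ ∑ e ∈ N, A v e := by
    intro v
    rw [← hNim, Finset.sum_image (fun s hs t ht h =>
      hfinj s t (Finset.mem_range.1 hs) (Finset.mem_range.1 ht) h)]
    exact circle_row_even A hA ⟨hk2, huinj, hfinj, hedge⟩ v
  obtain ⟨P, hP⟩ : (2:ℤ) ∣ ∑ e ∈ N, (∑ v, A v e * y₀ v) := by
    have hsw : ∑ e ∈ N, (∑ v, A v e * y₀ v) = ∑ v, (∑ e ∈ N, A v e) * y₀ v := by
      rw [Finset.sum_comm]
      exact Finset.sum_congr rfl fun v _ => by rw [Finset.sum_mul]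
    rw [hsw]
    exact Finset.dvd_sum fun v _ => (hrowN v).mul_right _
  have hNsplit : ∑ e ∈ N.erase (f 0), (∑ v, A v e * y₀ v) + (∑ v, A v (f 0) * y₀ v)
      = ∑ e ∈ N, (∑ v, A v e * y₀ v) := Finset.sum_erase_add _ _ hf0N
  have hNsplit2 : ∑ e ∈ N.erase (f 0), x e + x (f 0) = ∑ e ∈ N, x e :=
    Finset.sum_erase_add _ _ hf0N
  have herase : ∑ e ∈ N.erase (f 0), (∑ v, A v e * y₀ v) = ∑ e ∈ N.erase (f 0), x e := by
    refine Finset.sum_congr rfl fun e he => ?_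
    rw [Finset.mem_erase] at he
    exact hy₀ e (Finset.mem_erase.2 ⟨he.1, hNF he.2⟩)
  obtain ⟨m, hm⟩ : (2:ℤ) ∣ (x (f 0) - ∑ v, A v (f 0) * y₀ v) := by
    obtain ⟨X, hX⟩ := hx
    rw [herase] at hNsplit
    refine ⟨X - P, ?_⟩
    omega
  obtain ⟨q, hq⟩ : ∃ q : ℤ, τ * q = x (f 0) - ∑ v, A v (f 0) * y₀ v := by
    rcases hτpm with h | h
    · exact ⟨m, by rw [h, hm]⟩
    · exact ⟨-m, by rw [h, hm]; ring⟩
  refine ⟨fun v => y₀ v + q * η v, fun e he => ?_⟩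
  have hdist : ∀ e : E, ∑ v, A v e * (y₀ v + q * η v)
      = (∑ v, A v e * y₀ v) + q * (∑ v, A v e * η v) := by
    intro e
    rw [Finset.mul_sum, ← Finset.sum_add_distrib]
    exact Finset.sum_congr rfl fun v _ => by ring
  rw [hdist]
  by_cases hef : e = f 0
  · subst hef
    rw [hτeq]
    have hη0sol : ∑ v, A v (f 0) * η v = τ := hτeq
    linarith [hq]
  · rw [hηsol e (Finset.mem_erase.2 ⟨hef, he⟩), hy₀ e (Finset.mem_erase.2 ⟨hef, he⟩)]
    simp

end Final

end WeightsAux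

open WeightsAux

/-- Exactness of the weight map for the toric ring of a signed poset: the map
`φ(x) = (⟨a_1,x⟩, …, ⟨a_t,x⟩)` (with an extra `Σ_{e ∈ N} x e mod 2` component in
Case 3) is surjective with kernel exactly `A^T ℤ^d`. -/
theorem weights_exact_sequence
    (d : ℕ) (hd : 1 ≤ d) (E : Type*) [Fintype E] [DecidableEq E]
    (A : Matrix (Fin d) E ℤ)
    (hA : IsBidirected A) (hconn : ConnectedInc A)
    -- the chosen maximal signed pseudo-forest `F` and the remaining edges `ε_1, …, ε_t`
    (F : Finset E) (t : ℕ) (ht : t = Fintype.card E - F.card)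
    (ε : Fin t → E) (hεinj : Function.Injective ε)
    (hεrange : ∀ e, e ∈ Set.range ε ↔ e ∉ F)
    -- the fundamental-circuit kernel vectors `a_i`
    (a : Fin t → E → ℤ)
    (hker : ∀ i v, ∑ e, a i e * A v e = 0)
    (hprim : ∀ i, Finset.univ.gcd (a i) = 1)
    (hsupp : ∀ i e, a i e ≠ 0 → e ∈ F ∨ e = ε i)
    (hpos : ∀ i, 0 < a i (ε i))
    -- the edge set `N` of the unique negative circle of `F` (relevant in Case 3 only)
    (N : Finset E) :
    -- Case 1: no halfedges and every circle positive; `F` is a spanning signed tree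
    (((¬ HasHalfedge A) ∧ (∀ k u f, IsCircle A k u f → circleSign A k u f = 1) ∧
        F.card = d - 1 ∧
        LinearIndependent ℝ fun e : F => fun v => (A v (e : E) : ℝ)) →
      (Function.Surjective (fun (x : E → ℤ) (i : Fin t) => ∑ e, a i e * x e) ∧
        ∀ x : E → ℤ, (∀ i, ∑ e, a i e * x e = 0) ↔
          ∃ y : Fin d → ℤ, x = Aᵀ.mulVec y)) ∧
    -- Case 2: there is a halfedge; `F` is a spanning signed halfedge-tree
    ((HasHalfedge A ∧ F.card = d ∧
        (∃! e, e ∈ F ∧ IsHalfedgeCol fun v => A v e) ∧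
        (∀ i j : Fin d, Relation.ReflTransGen
          (fun u v => u ≠ v ∧ ∃ e ∈ F, A u e ≠ 0 ∧ A v e ≠ 0) i j)) →
      (Function.Surjective (fun (x : E → ℤ) (i : Fin t) => ∑ e, a i e * x e) ∧
        ∀ x : E → ℤ, (∀ i, ∑ e, a i e * x e = 0) ↔
          ∃ y : Fin d → ℤ, x = Aᵀ.mulVec y)) ∧
    -- Case 3: no halfedges but a negative circle exists; `F` is a spanning signed
    -- pseudo-tree whose unique circle is negative with edge set `N`
    (((¬ HasHalfedge A) ∧
        (∃ k u f, IsCircle A k u f ∧ circleSign A k u f = -1) ∧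
        F.card = d ∧
        (∀ i j : Fin d, Relation.ReflTransGen
          (fun u v => u ≠ v ∧ ∃ e ∈ F, A u e ≠ 0 ∧ A v e ≠ 0) i j) ∧
        N ⊆ F ∧
        (∃ k u f, IsCircle A k u f ∧ (∀ s < k, f s ∈ F) ∧
          circleSign A k u f = -1 ∧ (Finset.range k).image f = N) ∧
        (∀ k u f, IsCircle A k u f → (∀ s < k, f s ∈ F) →
          (Finset.range k).image f = N)) →
      (Function.Surjective (fun (x : E → ℤ) =>
          ((fun i : Fin t => ∑ e, a i e * x e, ((∑ e ∈ N, x e : ℤ) : ZMod 2)) :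
            (Fin t → ℤ) × ZMod 2)) ∧
        ∀ x : E → ℤ,
          ((∀ i, ∑ e, a i e * x e = 0) ∧ ((∑ e ∈ N, x e : ℤ) : ZMod 2) = 0) ↔
          ∃ y : Fin d → ℤ, x = Aᵀ.mulVec y)) := by
  refine ⟨?_, ?_, ?_⟩
  · -- Case 1
    rintro ⟨hnh, hposc, hcardF, hlin⟩
    have hordF : ∀ e ∈ F, IsEdgeCol (fun v => A v e) := by
      intro e _
      rcases hA e with h | h
      · exact absurd ⟨e, h⟩ hnh
      · exact h
    have hind : ∀ g : E → ℝ, (∀ e, e ∉ F → g e = 0) →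
        (∀ v, ∑ e, g e * (A v e : ℝ) = 0) → ∀ e, g e = 0 := by
      intro g hg0 hrow e
      by_cases heF : e ∈ F
      · have hli := Fintype.linearIndependent_iff.1 hlin (fun e : F => g e)
        have hzero : (∑ e' : F, g (e' : E) • (fun v => (A v (e' : E) : ℝ))) = 0 := by
          funext v
          rw [Finset.sum_apply]
          have h1 : ∀ e' : F, (g (e' : E) • fun v => (A v (e' : E) : ℝ)) v
              = g (e' : E) * (A v (e' : E) : ℝ) := fun _ => rfl
          rw [Finset.sum_congr rfl fun e' _ => h1 e']
          rw [Finset.sum_coe_sort F (fun e' => g e' * (A v e' : ℝ))]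
          have hext := Finset.sum_subset (Finset.subset_univ F)
            (fun x _ hx => by rw [hg0 x hx, zero_mul] :
              ∀ x ∈ Finset.univ, x ∉ F → g x * (A v x : ℝ) = 0)
          rw [hext, hrow v]
          rfl
        exact hli hzero ⟨e, heF⟩
      · exact hg0 e heF
    have SolvF : ∀ x : E → ℤ, ∃ y : Fin d → ℤ, ∀ e ∈ F, (∑ v, A v e * y v) = x e := by
      intro x
      obtain ⟨y, hy⟩ := forest_solve A hA hposc F hind F.card F (Finset.Subset.refl F)
        rfl hordF x
      exact ⟨y, hy⟩
    exact master A hεinj hεrange hker hprim hsupp hpos SolvF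
  · -- Case 2
    rintro ⟨hhe, hcardF, hhalf, hconnF⟩
    exact master A hεinj hεrange hker hprim hsupp hpos
      (solv_case2 A hd hA hcardF hhalf hconnF)
  · -- Case 3
    rintro ⟨hnh, hnegex, hcardF, hconnF, hNF, ⟨k, u, f, hcirc, hfF, hsign, hNim⟩, huniqN⟩
    have hk2 : 2 ≤ k := hcirc.1
    have hordE : ∀ e : E, IsEdgeCol (fun v => A v e) := by
      intro e
      rcases hA e with h | h
      · exact absurd ⟨e, h⟩ hnh
      · exact h
    have hseven : ∀ e : E, 2 ∣ ∑ v, A v e := by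
      intro e
      obtain ⟨i, j, hij, hi, hj, h0⟩ := edge_spec (hordE e)
      rw [sum_two (Finset.mem_univ i) (Finset.mem_univ j) hij
        (fun z _ hz1 hz2 => h0 z hz1 hz2)]
      rcases hi with h | h <;> rcases hj with h' | h' <;> rw [h, h'] <;> norm_num
    have hNne : N.Nonempty :=
      ⟨f 0, hNim ▸ Finset.mem_image.2 ⟨0, Finset.mem_range.2 (by omega), rfl⟩⟩
    have hrowN : ∀ v, 2 ∣ ∑ e ∈ N, A v e := by
      intro v
      rw [← hNim, Finset.sum_image (fun s hs t' ht' h =>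
        hcirc.2.2.1 s t' (Finset.mem_range.1 hs) (Finset.mem_range.1 ht') h)]
      exact circle_row_even A hA hcirc v
    have hN4 : ∃ c : ℤ, ∑ e ∈ N, (∑ v, A v e) = 4 * c + 2 := by
      rw [← hNim, Finset.sum_image (fun s hs t' ht' h =>
        hcirc.2.2.1 s t' (Finset.mem_range.1 hs) (Finset.mem_range.1 ht') h)]
      have hper : ∀ s ∈ Finset.range k, (∑ v, A v (f s))
          = A (u s) (f s) + A (u ((s + 1) % k)) (f s) := by
        intro s hs
        rw [Finset.mem_range] at hs
        have hune : u s ≠ u ((s + 1) % k) := by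
          intro h
          have h2 := hcirc.2.1 s ((s + 1) % k) hs (Nat.mod_lt _ (by omega)) h
          rcases Nat.lt_or_ge (s + 1) k with hlt | hge
          · rw [Nat.mod_eq_of_lt hlt] at h2; omega
          · have hk1 : s + 1 = k := by omega
            rw [hk1, Nat.mod_self] at h2; omega
        rw [sum_two (Finset.mem_univ (u s)) (Finset.mem_univ (u ((s + 1) % k))) hune
          (fun z _ hz1 hz2 => by
            by_contra hcc
            rcases (hcirc.2.2.2 s hs).2.2 z hcc with h | h
            · exact hz1 h
            · exact hz2 h)]
      rw [Finset.sum_congr rfl hper]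
      exact neg_circle_sum A hA hcirc hsign
    exact master3 A hεinj hεrange hker hprim hsupp hpos N hNF hNne hseven hrowN hN4
      (solv_case3 A hd hA hnh hcardF hconnF hNF hcirc hfF hsign hNim)
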